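/- arXiv:1902.11229 — 5 statements merged into one kernel-verified Lean document; each statement's English description precedes it below -/
import Mathlib

section
/- Nash-type inequality (Lemma 3.3 of the paper): Let μ be a probability measure on a measurable space, let Φ be a measurable function with 0 < Φ ≤ M almost everywhere for a constant M, and suppose ln∘Φ is μ-integrable. Then | ln(∫Φ dμ) − ∫ ln Φ dμ | · (∫ Φ dμ) ≤ M · ∫ | ln Φ − ∫ ln Φ dμ | dμ. -/
open MeasureTheory Real

/-! The deviation `ln ∫Φ - ∫ ln Φ` is nonnegative by Jensen's inequality, and multiplied by `∫Φ`
it is dominated, by Jensen's inequality for the convex function `x ln x`, by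
`∫ Φ (ln Φ - ∫ ln Φ)`; this last integral is at most `M ∫ |ln Φ - ∫ ln Φ|` since `0 < Φ ≤ M`. -/

section

variable {α : Type*} [MeasurableSpace α] {μ : Measure α}

-- Jensen's inequality in Mathlib needs a closed domain, which `Ioi 0` is not: go through `exp`.
lemma integral_log_le_log_integral [IsProbabilityMeasure μ] {f : α → ℝ}
    (hf_pos : ∀ᵐ x ∂μ, 0 < f x) (hf : Integrable f μ)
    (hlog : Integrable (fun x ↦ log (f x)) μ) :
    ∫ x, log (f x) ∂μ ≤ log (∫ x, f x ∂μ) := by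
  have hexp_log : (fun x ↦ exp (log (f x))) =ᵐ[μ] f := by
    filter_upwards [hf_pos] with x hx using exp_log hx
  have hexp : exp (∫ x, log (f x) ∂μ) ≤ ∫ x, f x ∂μ := by
    rw [← integral_congr_ae hexp_log]
    exact convexOn_exp.map_integral_le continuousOn_exp isClosed_univ (by simp) hlog
      ((integrable_congr hexp_log).2 hf)
  exact (le_log_iff_exp_le ((exp_pos _).trans_le hexp)).2 hexp

lemma mul_log_integral_le_integral_mul_log [IsProbabilityMeasure μ] {f : α → ℝ}
    (hf_nonneg : ∀ᵐ x ∂μ, 0 ≤ f x) (hf : Integrable f μ)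
    (hf_log : Integrable (fun x ↦ f x * log (f x)) μ) :
    (∫ x, f x ∂μ) * log (∫ x, f x ∂μ) ≤ ∫ x, f x * log (f x) ∂μ :=
  convexOn_mul_log.map_integral_le continuous_mul_log.continuousOn isClosed_Ici hf_nonneg hf hf_log

lemma integral_mul_le_mul_integral_abs {f g : α → ℝ} {M : ℝ} (hf : AEStronglyMeasurable f μ)
    (hf_nonneg : ∀ᵐ x ∂μ, 0 ≤ f x) (hf_le : ∀ᵐ x ∂μ, f x ≤ M) (hg : Integrable g μ) :
    ∫ x, f x * g x ∂μ ≤ M * ∫ x, |g x| ∂μ := by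
  have hf_bound : ∀ᵐ x ∂μ, ‖f x‖ ≤ M := by
    filter_upwards [hf_nonneg, hf_le] with x h0 hM
    rwa [norm_of_nonneg h0]
  rw [← integral_const_mul]
  refine integral_mono_ae (hg.bdd_mul hf hf_bound) (hg.abs.const_mul M) ?_
  filter_upwards [hf_nonneg, hf_le] with x h0 hM
  calc f x * g x ≤ f x * |g x| := mul_le_mul_of_nonneg_left (le_abs_self _) h0
    _ ≤ M * |g x| := mul_le_mul_of_nonneg_right hM (abs_nonneg _)

end

/-- **Nash-type inequality (Lemma 3.3).** For a probability measure `μ` and a measurable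
function `Φ` with `0 < Φ ≤ M` a.e. such that `ln ∘ Φ` is integrable,
`|ln(∫Φ dμ) − ∫ ln Φ dμ| · (∫Φ dμ) ≤ M · ∫ |ln Φ − ∫ ln Φ dμ| dμ`. -/
theorem nash_type_inequality {α : Type*} [MeasurableSpace α]
    (μ : Measure α) [IsProbabilityMeasure μ]
    (Φ : α → ℝ) (M : ℝ)
    (hmeas : Measurable Φ)
    (hpos : ∀ᵐ x ∂μ, 0 < Φ x)
    (hbdd : ∀ᵐ x ∂μ, Φ x ≤ M)
    (hlog_int : Integrable (fun x => Real.log (Φ x)) μ) :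
    |Real.log (∫ x, Φ x ∂μ) - ∫ x, Real.log (Φ x) ∂μ| * (∫ x, Φ x ∂μ) ≤
      M * ∫ x, |Real.log (Φ x) - ∫ y, Real.log (Φ y) ∂μ| ∂μ := by
  set I := ∫ x, Φ x ∂μ
  set L := ∫ x, log (Φ x) ∂μ
  have hΦ_bound : ∀ᵐ x ∂μ, ‖Φ x‖ ≤ M := by
    filter_upwards [hpos, hbdd] with x h0 hM
    rwa [norm_of_nonneg h0.le]
  have hΦ : Integrable Φ μ := .of_bound hmeas.aestronglyMeasurable M hΦ_bound
  have hΦ_log : Integrable (fun x ↦ Φ x * log (Φ x)) μ :=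
    hlog_int.bdd_mul hmeas.aestronglyMeasurable hΦ_bound
  have hΦ_nonneg : ∀ᵐ x ∂μ, 0 ≤ Φ x := hpos.mono fun x hx ↦ hx.le
  rw [abs_of_nonneg (sub_nonneg.2 (integral_log_le_log_integral hpos hΦ hlog_int))]
  calc (log I - L) * I = I * log I - L * I := by ring
    _ ≤ ∫ x, Φ x * log (Φ x) ∂μ - L * I := by
      gcongr; exact mul_log_integral_le_integral_mul_log hΦ_nonneg hΦ hΦ_log
    _ = ∫ x, Φ x * (log (Φ x) - L) ∂μ := by
      simp_rw [mul_sub]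
      rw [integral_sub hΦ_log (hΦ.mul_const L), integral_mul_const, mul_comm]
    _ ≤ M * ∫ x, |log (Φ x) - L| ∂μ :=
      integral_mul_le_mul_integral_abs hmeas.aestronglyMeasurable hΦ_nonneg hbdd
        (hlog_int.sub (integrable_const L))
end

section
/- Weighted Poincaré inequality in the periodic cylinder (inequality (3.10)): Let Z₀ > 0. There is a constant C depending only on ζ₁ and Z₀ such that for every R ≥ 1 and every smooth function Ψ : (0,∞)×ℝ → ℝ which is Z₀-periodic in z (with Ψ and ∂_rΨ, ∂_zΨ integrable against ζ_R² dμ): ∫_{D_R} |Ψ − Ψ̄|² ζ_R² dμ ≤ C R² ∫_{D_R} (|∂_rΨ|² + |∂_zΨ|²) ζ_R² dμ, where Ψ̄ = (∫_{D_R} ζ_R² dμ)^{−1} ∫_{D_R} Ψ ζ_R² dμ. -/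
open MeasureTheory Real Set Filter
open scoped Interval
noncomputable section


/-- indicator of a continuous-on-open-set function is measurable -/
lemma measurable_indicator_of_continuousOn {f : ℝ × ℝ → ℝ} {s : Set (ℝ × ℝ)}
    (hs : IsOpen s) (hf : ContinuousOn f s) : Measurable (s.indicator f) := by
  apply measurable_of_isOpen
  intro U hU
  by_cases h0 : (0:ℝ) ∈ U
  · have : (s.indicator f) ⁻¹' U = (s ∩ f ⁻¹' U) ∪ sᶜ := by
      ext x; by_cases hx : x ∈ s <;> simp [Set.indicator, hx, h0]
    rw [this]
    exact ((hf.isOpen_inter_preimage hs hU).measurableSet).union hs.measurableSet.compl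
  · have : (s.indicator f) ⁻¹' U = (s ∩ f ⁻¹' U) := by
      ext x; by_cases hx : x ∈ s <;> simp [Set.indicator, hx, h0]
    rw [this]
    exact (hf.isOpen_inter_preimage hs hU).measurableSet

/-- Cauchy–Schwarz for interval integrals of continuous functions. -/
lemma sq_integral_le_mul {a b : ℝ} (hab : a ≤ b) {g : ℝ → ℝ}
    (hg : ContinuousOn g (Icc a b)) :
    (∫ x in Ioc a b, g x) ^ 2 ≤ (b - a) * ∫ x in Ioc a b, (g x) ^ 2 := by
  rcases eq_or_lt_of_le hab with rfl | hlt
  · simp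
  have hint : IntegrableOn g (Ioc a b) := (hg.integrableOn_compact isCompact_Icc).mono_set Ioc_subset_Icc_self
  have hint2 : IntegrableOn (fun x => (g x)^2) (Ioc a b) :=
    ((hg.pow 2).integrableOn_compact isCompact_Icc).mono_set Ioc_subset_Icc_self
  set μ := volume.restrict (Ioc a b)
  have hμ : μ univ = ENNReal.ofReal (b - a) := by
    simp [μ, Measure.restrict_apply_univ, Real.volume_Ioc]
  set c : ℝ := (∫ x, g x ∂μ) / (b - a) with hc
  have key : 0 ≤ ∫ x, (g x - c)^2 ∂μ := integral_nonneg (fun x => sq_nonneg _)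
  have hconst : Integrable (fun _ : ℝ => c) μ := integrable_const c
  have expand : ∫ x, (g x - c)^2 ∂μ
      = (∫ x, (g x)^2 ∂μ) - 2*c*(∫ x, g x ∂μ) + c^2*(b-a) := by
    have hfe : (fun x => (g x - c)^2) = fun x => (g x)^2 - (2*c) * g x + c^2 := by
      funext x; ring
    rw [hfe]
    have h1 : Integrable (fun x => (g x)^2 - (2*c) * g x) μ :=
      hint2.sub (hint.const_mul (2*c))
    rw [integral_add h1 (integrable_const _)]
    rw [integral_sub hint2 (hint.const_mul (2*c))]
    rw [MeasureTheory.integral_const_mul, integral_const]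
    have hm : (μ univ).toReal = b - a := by rw [hμ]; exact ENNReal.toReal_ofReal (by linarith)
    rw [measureReal_def, hm]; simp only [smul_eq_mul]; ring
  have hba : (0:ℝ) < b - a := by linarith
  have expand2 : ∫ x, (g x - c)^2 ∂μ
      = (∫ x, (g x)^2 ∂μ) - (∫ x, g x ∂μ)^2/(b-a) := by
    rw [expand, hc]; field_simp; ring
  have h2 : (∫ x, g x ∂μ)^2/(b-a) ≤ ∫ x, (g x)^2 ∂μ := by
    rw [expand2] at key; linarith
  calc (∫ x in Ioc a b, g x) ^ 2 = (∫ x, g x ∂μ)^2 := rfl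
    _ ≤ (b-a) * ∫ x, (g x)^2 ∂μ := by
        rw [div_le_iff₀ hba] at h2; linarith [h2]
    _ = (b - a) * ∫ x in Ioc a b, (g x)^2 := rfl

lemma integral_Ioo_id {a : ℝ} (ha : 0 ≤ a) : ∫ x in Ioo (0:ℝ) a, x = a^2/2 := by
  rw [← integral_Ioc_eq_integral_Ioo, ← intervalIntegral.integral_of_le ha, integral_id]
  ring

lemma lintegral_Ioo_id {a : ℝ} (ha : 0 ≤ a) :
    ∫⁻ x in Ioo (0:ℝ) a, ENNReal.ofReal x = ENNReal.ofReal (a^2/2) := by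
  rw [← ofReal_integral_eq_lintegral_ofReal]
  · rw [integral_Ioo_id ha]
  · exact (continuous_id.continuousOn.integrableOn_compact (isCompact_Icc (a := 0) (b := a))).mono_set Ioo_subset_Icc_self
  · filter_upwards [ae_restrict_mem measurableSet_Ioo] with x hx
    exact le_of_lt hx.1


/-- Partial derivative in the first (radial) variable. -/
def pdr2 (f : ℝ → ℝ → ℝ) : ℝ → ℝ → ℝ := fun r z => deriv (fun s => f s z) r
/-- Partial derivative in the second (axial) variable. -/
def pdz2 (f : ℝ → ℝ → ℝ) : ℝ → ℝ → ℝ := fun r z => deriv (fun s => f r s) z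

variable {Ψ : ℝ → ℝ → ℝ}

lemma isOpenS : IsOpen (Ioi (0:ℝ) ×ˢ (univ : Set ℝ)) := isOpen_Ioi.prod isOpen_univ

lemma hasDerivAt_slice_r
    (hΨ : ContDiffOn ℝ (⊤ : ℕ∞) (fun p : ℝ × ℝ => Ψ p.1 p.2) (Ioi 0 ×ˢ (univ : Set ℝ)))
    {r z : ℝ} (hr : 0 < r) :
    HasDerivAt (fun s => Ψ s z)
      (fderiv ℝ (fun p : ℝ × ℝ => Ψ p.1 p.2) (r, z) (1, 0)) r := by
  have hmem : (r, z) ∈ (Ioi (0:ℝ) ×ˢ (univ : Set ℝ)) := ⟨hr, mem_univ _⟩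
  have hd : DifferentiableAt ℝ (fun p : ℝ × ℝ => Ψ p.1 p.2) (r, z) :=
    (hΨ.differentiableOn (by norm_num)).differentiableAt (isOpenS.mem_nhds hmem)
  have hL : HasDerivAt (fun s : ℝ => (s, z)) ((1:ℝ), (0:ℝ)) r := by
    simpa using ((hasDerivAt_id r).prodMk (hasDerivAt_const r z))
  exact hd.hasFDerivAt.comp_hasDerivAt r hL

lemma pdr2_eq
    (hΨ : ContDiffOn ℝ (⊤ : ℕ∞) (fun p : ℝ × ℝ => Ψ p.1 p.2) (Ioi 0 ×ˢ (univ : Set ℝ)))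
    {r z : ℝ} (hr : 0 < r) :
    pdr2 Ψ r z = fderiv ℝ (fun p : ℝ × ℝ => Ψ p.1 p.2) (r, z) (1, 0) :=
  (hasDerivAt_slice_r hΨ hr).deriv

lemma hasDerivAt_pdr2
    (hΨ : ContDiffOn ℝ (⊤ : ℕ∞) (fun p : ℝ × ℝ => Ψ p.1 p.2) (Ioi 0 ×ˢ (univ : Set ℝ)))
    {r z : ℝ} (hr : 0 < r) :
    HasDerivAt (fun s => Ψ s z) (pdr2 Ψ r z) r := by
  rw [pdr2_eq hΨ hr]; exact hasDerivAt_slice_r hΨ hr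

lemma hasDerivAt_slice_z
    (hΨ : ContDiffOn ℝ (⊤ : ℕ∞) (fun p : ℝ × ℝ => Ψ p.1 p.2) (Ioi 0 ×ˢ (univ : Set ℝ)))
    {r z : ℝ} (hr : 0 < r) :
    HasDerivAt (fun t => Ψ r t)
      (fderiv ℝ (fun p : ℝ × ℝ => Ψ p.1 p.2) (r, z) (0, 1)) z := by
  have hmem : (r, z) ∈ (Ioi (0:ℝ) ×ˢ (univ : Set ℝ)) := ⟨hr, mem_univ _⟩
  have hd : DifferentiableAt ℝ (fun p : ℝ × ℝ => Ψ p.1 p.2) (r, z) :=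
    (hΨ.differentiableOn (by norm_num)).differentiableAt (isOpenS.mem_nhds hmem)
  have hL : HasDerivAt (fun t : ℝ => (r, t)) ((0:ℝ), (1:ℝ)) z := by
    simpa using ((hasDerivAt_const z r).prodMk (hasDerivAt_id z))
  exact hd.hasFDerivAt.comp_hasDerivAt z hL

lemma pdz2_eq
    (hΨ : ContDiffOn ℝ (⊤ : ℕ∞) (fun p : ℝ × ℝ => Ψ p.1 p.2) (Ioi 0 ×ˢ (univ : Set ℝ)))
    {r z : ℝ} (hr : 0 < r) :
    pdz2 Ψ r z = fderiv ℝ (fun p : ℝ × ℝ => Ψ p.1 p.2) (r, z) (0, 1) :=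
  (hasDerivAt_slice_z hΨ hr).deriv

lemma hasDerivAt_pdz2
    (hΨ : ContDiffOn ℝ (⊤ : ℕ∞) (fun p : ℝ × ℝ => Ψ p.1 p.2) (Ioi 0 ×ˢ (univ : Set ℝ)))
    {r z : ℝ} (hr : 0 < r) :
    HasDerivAt (fun t => Ψ r t) (pdz2 Ψ r z) z := by
  rw [pdz2_eq hΨ hr]; exact hasDerivAt_slice_z hΨ hr

lemma continuousOn_pdr2
    (hΨ : ContDiffOn ℝ (⊤ : ℕ∞) (fun p : ℝ × ℝ => Ψ p.1 p.2) (Ioi 0 ×ˢ (univ : Set ℝ))) :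
    ContinuousOn (fun p : ℝ × ℝ => pdr2 Ψ p.1 p.2) (Ioi 0 ×ˢ (univ : Set ℝ)) := by
  have hf : ContinuousOn (fderiv ℝ (fun p : ℝ × ℝ => Ψ p.1 p.2)) (Ioi 0 ×ˢ (univ : Set ℝ)) :=
    hΨ.continuousOn_fderiv_of_isOpen isOpenS (by norm_num)
  have : ContinuousOn (fun p : ℝ × ℝ =>
      fderiv ℝ (fun p : ℝ × ℝ => Ψ p.1 p.2) p (1, 0)) (Ioi 0 ×ˢ (univ : Set ℝ)) :=
    hf.clm_apply continuousOn_const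
  exact this.congr (fun p hp => pdr2_eq hΨ hp.1)

lemma continuousOn_pdz2
    (hΨ : ContDiffOn ℝ (⊤ : ℕ∞) (fun p : ℝ × ℝ => Ψ p.1 p.2) (Ioi 0 ×ˢ (univ : Set ℝ))) :
    ContinuousOn (fun p : ℝ × ℝ => pdz2 Ψ p.1 p.2) (Ioi 0 ×ˢ (univ : Set ℝ)) := by
  have hf : ContinuousOn (fderiv ℝ (fun p : ℝ × ℝ => Ψ p.1 p.2)) (Ioi 0 ×ˢ (univ : Set ℝ)) :=
    hΨ.continuousOn_fderiv_of_isOpen isOpenS (by norm_num)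
  have : ContinuousOn (fun p : ℝ × ℝ =>
      fderiv ℝ (fun p : ℝ × ℝ => Ψ p.1 p.2) p (0, 1)) (Ioi 0 ×ˢ (univ : Set ℝ)) :=
    hf.clm_apply continuousOn_const
  exact this.congr (fun p hp => pdz2_eq hΨ hp.1)

lemma continuousOn_F
    (hΨ : ContDiffOn ℝ (⊤ : ℕ∞) (fun p : ℝ × ℝ => Ψ p.1 p.2) (Ioi 0 ×ˢ (univ : Set ℝ))) :
    ContinuousOn (fun p : ℝ × ℝ => Ψ p.1 p.2) (Ioi 0 ×ˢ (univ : Set ℝ)) :=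
  hΨ.continuousOn


/-- The region `D_R = (0,R) × [0,Z₀)` in the `(r,z)` variables. -/
def DReg (Z₀ R : ℝ) : Set (ℝ × ℝ) := Ioo 0 R ×ˢ Ico 0 Z₀

lemma sq_uIoc_le {a b : ℝ} {g : ℝ → ℝ} (hg : ContinuousOn g (uIcc a b)) :
    (∫ x in a..b, g x) ^ 2 ≤ |b - a| * ∫ x in uIoc a b, (g x) ^ 2 := by
  rcases le_total a b with hab | hba
  · rw [intervalIntegral.integral_of_le hab, uIoc_of_le hab, abs_of_nonneg (by linarith)]
    exact sq_integral_le_mul hab (by rwa [uIcc_of_le hab] at hg)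
  · rw [intervalIntegral.integral_symm, neg_sq, intervalIntegral.integral_of_le hba,
      uIoc_of_ge hba, abs_of_nonpos (by linarith)]
    have := sq_integral_le_mul hba (by rwa [uIcc_of_ge hba] at hg)
    simpa using this

lemma pointwise_bound {Ψ : ℝ → ℝ → ℝ} {Z₀ R : ℝ}
    (hΨ : ContDiffOn ℝ (⊤ : ℕ∞) (fun p : ℝ × ℝ => Ψ p.1 p.2) (Ioi 0 ×ˢ (univ : Set ℝ)))
    (hZ₀ : 0 < Z₀) (hR : 0 < R) {p q : ℝ × ℝ}
    (hp : p ∈ DReg Z₀ R) (hq : q ∈ DReg Z₀ R) :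
    (Ψ q.1 q.2 - Ψ p.1 p.2) ^ 2 ≤
      2 * R * (∫ s in uIoc p.1 q.1, (pdr2 Ψ s p.2) ^ 2) +
      2 * Z₀ * (∫ t in Ico 0 Z₀, (pdz2 Ψ q.1 t) ^ 2) := by
  obtain ⟨⟨hp1, hp1R⟩, hp2, hp2Z⟩ := hp
  obtain ⟨⟨hq1, hq1R⟩, hq2, hq2Z⟩ := hq
  set a : ℝ := Ψ q.1 p.2 - Ψ p.1 p.2 with ha
  set b : ℝ := Ψ q.1 q.2 - Ψ q.1 p.2 with hb
  have hsplit : Ψ q.1 q.2 - Ψ p.1 p.2 = a + b := by rw [ha, hb]; ring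
  have huIccr : uIcc p.1 q.1 ⊆ Ioi (0:ℝ) := fun x hx => lt_of_lt_of_le
    (lt_min hp1 hq1) hx.1
  -- radial step
  have hcontr : ContinuousOn (fun s => pdr2 Ψ s p.2) (uIcc p.1 q.1) := by
    have hcq : Continuous (fun s : ℝ => (s, p.2)) := continuous_id.prodMk continuous_const
    exact (continuousOn_pdr2 hΨ).comp (hcq.continuousOn (s := uIcc p.1 q.1))
      (fun x hx => ⟨huIccr hx, mem_univ _⟩)
  have hFTCr : ∫ s in p.1..q.1, pdr2 Ψ s p.2 = a := by
    rw [ha]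
    apply intervalIntegral.integral_eq_sub_of_hasDerivAt (f := fun s => Ψ s p.2)
    · exact fun x hx => hasDerivAt_pdr2 hΨ (huIccr hx)
    · exact hcontr.intervalIntegrable
  have hIr_nonneg : 0 ≤ ∫ s in uIoc p.1 q.1, (pdr2 Ψ s p.2) ^ 2 :=
    setIntegral_nonneg measurableSet_uIoc (fun x _ => sq_nonneg _)
  have har : a ^ 2 ≤ R * ∫ s in uIoc p.1 q.1, (pdr2 Ψ s p.2) ^ 2 := by
    calc a ^ 2 = (∫ s in p.1..q.1, pdr2 Ψ s p.2) ^ 2 := by rw [hFTCr]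
      _ ≤ |q.1 - p.1| * ∫ s in uIoc p.1 q.1, (pdr2 Ψ s p.2) ^ 2 := sq_uIoc_le hcontr
      _ ≤ R * ∫ s in uIoc p.1 q.1, (pdr2 Ψ s p.2) ^ 2 := by
          apply mul_le_mul_of_nonneg_right _ hIr_nonneg
          rw [abs_le]
          constructor <;> nlinarith
  -- axial step
  have hcontz : ContinuousOn (fun t => pdz2 Ψ q.1 t) (univ : Set ℝ) := by
    have hcq : Continuous (fun t : ℝ => (q.1, t)) := continuous_const.prodMk continuous_id
    exact (continuousOn_pdz2 hΨ).comp (hcq.continuousOn (s := univ))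
      (fun x _ => ⟨hq1, mem_univ _⟩)
  have hFTCz : ∫ t in p.2..q.2, pdz2 Ψ q.1 t = b := by
    rw [hb]
    apply intervalIntegral.integral_eq_sub_of_hasDerivAt (f := fun t => Ψ q.1 t)
    · exact fun x _ => hasDerivAt_pdz2 hΨ hq1
    · exact (hcontz.mono (subset_univ _)).intervalIntegrable
  have hIz_int : IntegrableOn (fun t => (pdz2 Ψ q.1 t)^2) (Ico 0 Z₀) := by
    have : ContinuousOn (fun t => (pdz2 Ψ q.1 t)^2) (Icc 0 Z₀) :=
      ((hcontz.mono (subset_univ _)).pow 2)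
    exact (this.integrableOn_compact isCompact_Icc).mono_set Ico_subset_Icc_self
  have hIz_nonneg : 0 ≤ ∫ t in Ico 0 Z₀, (pdz2 Ψ q.1 t) ^ 2 :=
    setIntegral_nonneg measurableSet_Ico (fun x _ => sq_nonneg _)
  have hsub : uIoc p.2 q.2 ⊆ Ico 0 Z₀ := by
    intro x hx
    rcases hx with ⟨hx1, hx2⟩
    constructor
    · exact le_of_lt (lt_of_le_of_lt (le_min hp2 hq2) hx1)
    · exact lt_of_le_of_lt hx2 (max_lt hp2Z hq2Z)
  have hbz : b ^ 2 ≤ Z₀ * ∫ t in Ico 0 Z₀, (pdz2 Ψ q.1 t) ^ 2 := by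
    calc b ^ 2 = (∫ t in p.2..q.2, pdz2 Ψ q.1 t) ^ 2 := by rw [hFTCz]
      _ ≤ |q.2 - p.2| * ∫ t in uIoc p.2 q.2, (pdz2 Ψ q.1 t) ^ 2 :=
          sq_uIoc_le (hcontz.mono (subset_univ _))
      _ ≤ Z₀ * ∫ t in Ico 0 Z₀, (pdz2 Ψ q.1 t) ^ 2 := by
          apply mul_le_mul
          · rw [abs_le]; constructor <;> nlinarith
          · exact setIntegral_mono_set hIz_int
              (Filter.Eventually.of_forall (fun x => sq_nonneg _))
              (HasSubset.Subset.eventuallyLE hsub)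
          · exact setIntegral_nonneg measurableSet_uIoc (fun x _ => sq_nonneg _)
          · linarith
  calc (Ψ q.1 q.2 - Ψ p.1 p.2) ^ 2 = (a + b)^2 := by rw [hsplit]
    _ ≤ 2*a^2 + 2*b^2 := by nlinarith [sq_nonneg (a - b)]
    _ ≤ 2 * R * (∫ s in uIoc p.1 q.1, (pdr2 Ψ s p.2) ^ 2) +
      2 * Z₀ * (∫ t in Ico 0 Z₀, (pdz2 Ψ q.1 t) ^ 2) := by nlinarith [har, hbz]

def W1F (ζ₁ : ℝ → ℝ) (R r : ℝ) : ENNReal := ENNReal.ofReal (ζ₁ (r/R)^2 * r)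

lemma W1F_meas {ζ₁ : ℝ → ℝ} (hζc : Continuous ζ₁) {R : ℝ} : Measurable (W1F ζ₁ R) :=
  ENNReal.measurable_ofReal.comp
    ((((hζc.comp (continuous_id.div_const R)).pow 2).mul continuous_id).measurable)

lemma W1F_le {ζ₁ : ℝ → ℝ} (hζ_range : ∀ x, ζ₁ x ∈ Icc (0:ℝ) 1) {R r : ℝ} (hr : 0 ≤ r) :
    W1F ζ₁ R r ≤ ENNReal.ofReal r := by
  apply ENNReal.ofReal_le_ofReal
  have h := hζ_range (r/R)
  have h1 : ζ₁ (r/R)^2 ≤ 1 := by nlinarith [h.1, h.2]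
  nlinarith [h1, hr]

lemma lint_W1F_le {ζ₁ : ℝ → ℝ} (hζ_range : ∀ x, ζ₁ x ∈ Icc (0:ℝ) 1) {R : ℝ} (hR : 0 ≤ R) :
    ∫⁻ a in Ioo (0:ℝ) R, W1F ζ₁ R a ≤ ENNReal.ofReal (R^2/2) := by
  calc ∫⁻ a in Ioo (0:ℝ) R, W1F ζ₁ R a ≤ ∫⁻ a in Ioo (0:ℝ) R, ENNReal.ofReal a := by
        apply setLIntegral_mono (ENNReal.measurable_ofReal.comp measurable_id)
        exact fun x hx => W1F_le hζ_range (le_of_lt hx.1)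
    _ = ENNReal.ofReal (R^2/2) := lintegral_Ioo_id hR

lemma lint_lt_bound {ζ₁ : ℝ → ℝ} (hζ_range : ∀ x, ζ₁ x ∈ Icc (0:ℝ) 1) {R s : ℝ} :
    ∫⁻ a in Ioo (0:ℝ) R, (if a < s then (1:ENNReal) else 0) * W1F ζ₁ R a
      ≤ ENNReal.ofReal (s^2/2) := by
  by_cases hs : 0 ≤ s
  · calc ∫⁻ a in Ioo (0:ℝ) R, (if a < s then (1:ENNReal) else 0) * W1F ζ₁ R a
        ≤ ∫⁻ a in Ioo (0:ℝ) R, (Ioo (0:ℝ) s).indicator (fun a => ENNReal.ofReal a) a := by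
          apply setLIntegral_mono (ENNReal.measurable_ofReal.indicator measurableSet_Ioo)
          intro x hx
          by_cases h : x < s
          · rw [if_pos h, one_mul, indicator_of_mem (show x ∈ Ioo (0:ℝ) s from ⟨hx.1, h⟩)]
            exact W1F_le hζ_range (le_of_lt hx.1)
          · rw [if_neg h, zero_mul]; exact zero_le
      _ = ∫⁻ a in Ioo (0:ℝ) s ∩ Ioo (0:ℝ) R, ENNReal.ofReal a := by
          rw [lintegral_indicator measurableSet_Ioo, Measure.restrict_restrict measurableSet_Ioo]
      _ ≤ ∫⁻ a in Ioo (0:ℝ) s, ENNReal.ofReal a := lintegral_mono_set inter_subset_left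
      _ = ENNReal.ofReal (s^2/2) := lintegral_Ioo_id hs
  · have : ∀ x ∈ Ioo (0:ℝ) R, (if x < s then (1:ENNReal) else 0) * W1F ζ₁ R x = 0 := by
      intro x hx
      rw [if_neg (by linarith [hx.1]), zero_mul]
    rw [setLIntegral_congr_fun measurableSet_Ioo this]
    simp

lemma lint_ge_bound {ζ₁ : ℝ → ℝ} (hζc : Continuous ζ₁)
    (hζ_anti : AntitoneOn ζ₁ (Ici 0)) (hζ_range : ∀ x, ζ₁ x ∈ Icc (0:ℝ) 1)
    {R s : ℝ} (hs : 0 < s) (hR : 0 < R) :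
    ∫⁻ a in Ioo (0:ℝ) R, (if s ≤ a then (1:ENNReal) else 0) * W1F ζ₁ R a
      ≤ ENNReal.ofReal (ζ₁ (s/R)^2) * ENNReal.ofReal (R^2/2) := by
  calc ∫⁻ a in Ioo (0:ℝ) R, (if s ≤ a then (1:ENNReal) else 0) * W1F ζ₁ R a
      ≤ ∫⁻ a in Ioo (0:ℝ) R, ENNReal.ofReal (ζ₁ (s/R)^2) * ENNReal.ofReal a := by
        apply setLIntegral_mono (measurable_const.mul ENNReal.measurable_ofReal)
        intro x hx
        by_cases h : s ≤ x
        · rw [if_pos h, one_mul]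
          unfold W1F
          simp only [Pi.mul_apply]
          rw [← ENNReal.ofReal_mul (sq_nonneg _)]
          apply ENNReal.ofReal_le_ofReal
          have hdiv : s/R ≤ x/R := by gcongr
          have hmono : ζ₁ (x/R) ≤ ζ₁ (s/R) :=
            hζ_anti (mem_Ici.2 (div_nonneg hs.le hR.le)) (mem_Ici.2 (div_nonneg (le_of_lt hx.1) hR.le)) hdiv
          have hsq : ζ₁ (x/R)^2 ≤ ζ₁ (s/R)^2 :=
            pow_le_pow_left₀ (hζ_range (x/R)).1 hmono 2
          nlinarith [hx.1.le]
        · rw [if_neg h, zero_mul]; exact zero_le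
    _ = ENNReal.ofReal (ζ₁ (s/R)^2) * ENNReal.ofReal (R^2/2) := by
        rw [lintegral_const_mul' _ _ ENNReal.ofReal_ne_top, lintegral_Ioo_id (le_of_lt hR)]


lemma lint_fst {μ ν : Measure ℝ} [SFinite μ] [SFinite ν] {f : ℝ → ENNReal}
    (hf : Measurable f) :
    ∫⁻ x, f x.1 ∂(μ.prod ν) = (∫⁻ a, f a ∂μ) * ν univ := by
  have h : (fun x : ℝ × ℝ => f x.1) = fun x : ℝ × ℝ => f x.1 * (fun _ : ℝ => (1:ENNReal)) x.2 := by
    funext x; simp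
  rw [h, lintegral_prod_mul hf.aemeasurable aemeasurable_const, lintegral_one]

/-- Generic Tonelli computation for the kernel term. -/
lemma quad_bound {μ1 μ2 : Measure ℝ} [SFinite μ1] [SFinite μ2]
    (hμ2 : μ2 univ ≠ ⊤)
    (g : ℝ → ℝ → ENNReal) (W : ℝ → ENNReal) (I J : ℝ → ℝ → ENNReal)
    (hg : Measurable (Function.uncurry g)) (hW : Measurable W)
    (hI : Measurable (Function.uncurry I)) (hJ : Measurable (Function.uncurry J))
    (hWfin : ∀ a, W a ≠ ⊤) (hIfin : ∀ a s, I a s ≠ ⊤) (hgfin : ∀ s z, g s z ≠ ⊤) :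
    ∫⁻ p, (∫⁻ q,
        (∫⁻ s, I p.1 s * J s q.1 * g s p.2 ∂μ1) * W p.1 * W q.1 ∂(μ1.prod μ2)) ∂(μ1.prod μ2)
      = (μ2 univ) * ∫⁻ s,
          ((∫⁻ a, I a s * W a ∂μ1) * ((∫⁻ b, J s b * W b ∂μ1) * ∫⁻ z, g s z ∂μ2)) ∂μ1 := by
  set CB : ℝ → ENNReal := fun s => ∫⁻ b, J s b * W b ∂μ1 with hCB
  have hCBm : Measurable CB := by
    apply Measurable.lintegral_prod_right' (f := fun x : ℝ × ℝ => J x.1 x.2 * W x.2)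
    exact hJ.mul (hW.comp measurable_snd)
  -- step 1 : inner q integral
  have hstep1 : ∀ a z : ℝ,
      ∫⁻ q, (∫⁻ s, I a s * J s q.1 * g s z ∂μ1) * W a * W q.1 ∂(μ1.prod μ2)
        = (W a * ∫⁻ s, I a s * g s z * CB s ∂μ1) * μ2 univ := by
    intro a z
    have hmeas : Measurable (fun b : ℝ => (∫⁻ s, I a s * J s b * g s z ∂μ1) * W a * W b) := by
      apply Measurable.mul _ hW
      apply Measurable.mul _ measurable_const
      apply Measurable.lintegral_prod_right'
        (f := fun x : ℝ × ℝ => I a x.2 * J x.2 x.1 * g x.2 z)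
      exact (((hI.comp (measurable_const.prodMk measurable_snd)).mul
        (hJ.comp (measurable_snd.prodMk measurable_fst))).mul
        (hg.comp (measurable_snd.prodMk measurable_const)))
    rw [show (fun q : ℝ × ℝ => (∫⁻ s, I a s * J s q.1 * g s z ∂μ1) * W a * W q.1)
        = (fun q : ℝ × ℝ => (fun b : ℝ => (∫⁻ s, I a s * J s b * g s z ∂μ1) * W a * W b) q.1)
        from rfl]
    rw [lint_fst hmeas]
    congr 1
    have e1 : ∀ b : ℝ, (∫⁻ s, I a s * J s b * g s z ∂μ1) * W a * W b
        = W a * ∫⁻ s, (I a s * g s z) * (J s b * W b) ∂μ1 := by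
      intro b
      have e2 : (fun s => (I a s * g s z) * (J s b * W b))
          = fun s => (I a s * J s b * g s z) * W b := by funext s; ring
      rw [e2, lintegral_mul_const' _ _ (hWfin b)]
      ring
    rw [lintegral_congr e1, lintegral_const_mul' _ _ (hWfin a)]
    congr 1
    have hswapmeas : AEMeasurable (Function.uncurry
        (fun b s => (I a s * g s z) * (J s b * W b))) (μ1.prod μ1) := by
      apply Measurable.aemeasurable
      apply Measurable.mul
      · exact ((hI.comp (measurable_const.prodMk measurable_snd)).mul
          (hg.comp (measurable_snd.prodMk measurable_const)))
      · exact (hJ.comp (measurable_snd.prodMk measurable_fst)).mul (hW.comp measurable_fst)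
    rw [lintegral_lintegral_swap hswapmeas]
    congr 1; funext s
    rw [lintegral_const_mul' _ _ (by
      exact ENNReal.mul_ne_top (hIfin a s) (hgfin s z))]
  -- rewrite the outer integrand using step 1
  have e3 : ∀ p : ℝ × ℝ, (∫⁻ q,
        (∫⁻ s, I p.1 s * J s q.1 * g s p.2 ∂μ1) * W p.1 * W q.1 ∂(μ1.prod μ2))
      = ((fun p : ℝ × ℝ => W p.1 * ∫⁻ s, I p.1 s * g s p.2 * CB s ∂μ1) p) * μ2 univ :=
    fun p => hstep1 p.1 p.2
  rw [lintegral_congr e3]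
  have hmeas2 : Measurable (fun p : ℝ × ℝ => W p.1 * ∫⁻ s, I p.1 s * g s p.2 * CB s ∂μ1) := by
    apply Measurable.mul (hW.comp measurable_fst)
    apply Measurable.lintegral_prod_right'
      (f := fun x : (ℝ × ℝ) × ℝ => I x.1.1 x.2 * g x.2 x.1.2 * CB x.2)
    exact ((hI.comp (measurable_fst.fst.prodMk measurable_snd)).mul
      (hg.comp (measurable_snd.prodMk measurable_fst.snd))).mul (hCBm.comp measurable_snd)
  rw [lintegral_mul_const' _ _ hμ2]
  rw [mul_comm (μ2 univ) _]  -- put μ2 univ on the right temporarily? keep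
  congr 1
  -- now: ∫⁻ p over μ1.prod μ2 of W p.1 * ∫⁻ s ... = ∫⁻ s, CA s * (CB s * ∫⁻ z, g s z)
  rw [lintegral_prod _ hmeas2.aemeasurable]
  have e4 : ∀ a : ℝ, ∫⁻ z, W a * ∫⁻ s, I a s * g s z * CB s ∂μ1 ∂μ2
      = ∫⁻ z, ∫⁻ s, W a * (I a s * g s z * CB s) ∂μ1 ∂μ2 := by
    intro a
    congr 1; funext z
    rw [lintegral_const_mul' _ _ (hWfin a)]
  rw [lintegral_congr e4]
  -- swap a ↔ z
  have hm5 : Measurable (fun x : ℝ × ℝ => ∫⁻ s, W x.1 * (I x.1 s * g s x.2 * CB s) ∂μ1) := by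
    apply Measurable.lintegral_prod_right'
      (f := fun y : (ℝ × ℝ) × ℝ => W y.1.1 * (I y.1.1 y.2 * g y.2 y.1.2 * CB y.2))
    exact (hW.comp measurable_fst.fst).mul
      (((hI.comp (measurable_fst.fst.prodMk measurable_snd)).mul
        (hg.comp (measurable_snd.prodMk measurable_fst.snd))).mul (hCBm.comp measurable_snd))
  rw [lintegral_lintegral_swap hm5.aemeasurable]
  -- for fixed z, swap a ↔ s and integrate
  have e5 : ∀ z : ℝ, ∫⁻ a, ∫⁻ s, W a * (I a s * g s z * CB s) ∂μ1 ∂μ1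
      = ∫⁻ s, (∫⁻ a, I a s * W a ∂μ1) * (CB s * g s z) ∂μ1 := by
    intro z
    have hm6 : AEMeasurable (Function.uncurry
        (fun a s => W a * (I a s * g s z * CB s))) (μ1.prod μ1) := by
      apply Measurable.aemeasurable
      exact (hW.comp measurable_fst).mul
        (((hI.mul (hg.comp (measurable_snd.prodMk measurable_const)))).mul
          (hCBm.comp measurable_snd))
    rw [lintegral_lintegral_swap hm6]
    congr 1; funext s
    have e6 : (fun a => W a * (I a s * g s z * CB s))
        = fun a => (I a s * W a) * (CB s * g s z) := by funext a; ring
    have hm8 : Measurable fun a : ℝ => I a s * W a :=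
      (hI.comp (measurable_id.prodMk measurable_const)).mul hW
    rw [e6, lintegral_mul_const _ hm8]
  rw [lintegral_congr e5]
  -- swap z ↔ s
  have hCAm : Measurable (fun s => ∫⁻ a, I a s * W a ∂μ1) := by
    apply Measurable.lintegral_prod_right' (f := fun y : ℝ × ℝ => I y.2 y.1 * W y.2)
    exact (hI.comp (measurable_snd.prodMk measurable_fst)).mul (hW.comp measurable_snd)
  have hm7 : AEMeasurable (Function.uncurry
      (fun z s => (∫⁻ a, I a s * W a ∂μ1) * (CB s * g s z))) (μ2.prod μ1) := by
    apply Measurable.aemeasurable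
    exact (hCAm.comp measurable_snd).mul
      ((hCBm.comp measurable_snd).mul (hg.comp (measurable_snd.prodMk measurable_fst)))
  rw [lintegral_lintegral_swap hm7]
  congr 1; funext s
  have e7 : (fun z => (∫⁻ a, I a s * W a ∂μ1) * (CB s * g s z))
      = fun z => ((∫⁻ a, I a s * W a ∂μ1) * CB s) * g s z := by funext z; ring
  have hm9 : Measurable fun z : ℝ => g s z :=
    hg.comp (measurable_const.prodMk measurable_id)
  rw [e7, lintegral_const_mul _ hm9]
  ring

def grF (Ψ : ℝ → ℝ → ℝ) : ℝ × ℝ → ENNReal := fun x =>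
  ENNReal.ofReal (((Ioi (0:ℝ)) ×ˢ (univ : Set ℝ)).indicator
    (fun y : ℝ × ℝ => (pdr2 Ψ y.1 y.2)^2) x)

def gzF (Ψ : ℝ → ℝ → ℝ) : ℝ × ℝ → ENNReal := fun x =>
  ENNReal.ofReal (((Ioi (0:ℝ)) ×ˢ (univ : Set ℝ)).indicator
    (fun y : ℝ × ℝ => (pdz2 Ψ y.1 y.2)^2) x)

lemma grF_meas {Ψ : ℝ → ℝ → ℝ}
    (hΨ : ContDiffOn ℝ (⊤ : ℕ∞) (fun p : ℝ × ℝ => Ψ p.1 p.2) (Ioi 0 ×ˢ (univ : Set ℝ))) :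
    Measurable (grF Ψ) :=
  ENNReal.measurable_ofReal.comp
    (measurable_indicator_of_continuousOn isOpenS ((continuousOn_pdr2 hΨ).pow 2))

lemma gzF_meas {Ψ : ℝ → ℝ → ℝ}
    (hΨ : ContDiffOn ℝ (⊤ : ℕ∞) (fun p : ℝ × ℝ => Ψ p.1 p.2) (Ioi 0 ×ˢ (univ : Set ℝ))) :
    Measurable (gzF Ψ) :=
  ENNReal.measurable_ofReal.comp
    (measurable_indicator_of_continuousOn isOpenS ((continuousOn_pdz2 hΨ).pow 2))

lemma grF_eq {Ψ : ℝ → ℝ → ℝ} {x : ℝ × ℝ} (hx : 0 < x.1) :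
    grF Ψ x = ENNReal.ofReal ((pdr2 Ψ x.1 x.2)^2) := by
  unfold grF
  rw [indicator_of_mem (show x ∈ (Ioi (0:ℝ)) ×ˢ (univ : Set ℝ) from ⟨hx, mem_univ _⟩)]

lemma gzF_eq {Ψ : ℝ → ℝ → ℝ} {x : ℝ × ℝ} (hx : 0 < x.1) :
    gzF Ψ x = ENNReal.ofReal ((pdz2 Ψ x.1 x.2)^2) := by
  unfold gzF
  rw [indicator_of_mem (show x ∈ (Ioi (0:ℝ)) ×ˢ (univ : Set ℝ) from ⟨hx, mem_univ _⟩)]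

lemma ind_decomp (a b s : ℝ) :
    (Ι a b).indicator (fun _ => (1:ENNReal)) s
      = (if a < s then (1:ENNReal) else 0) * (if s ≤ b then (1:ENNReal) else 0)
        + (if s ≤ a then (1:ENNReal) else 0) * (if b < s then (1:ENNReal) else 0) := by
  classical
  rw [indicator_apply]
  have hmem : s ∈ Ι a b ↔ (a < s ∧ s ≤ b) ∨ (b < s ∧ s ≤ a) := Set.mem_uIoc
  rw [show (if s ∈ Ι a b then (1:ENNReal) else 0)
      = if (a < s ∧ s ≤ b) ∨ (b < s ∧ s ≤ a) then (1:ENNReal) else 0 by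
    by_cases h : s ∈ Ι a b
    · rw [if_pos h, if_pos (hmem.1 h)]
    · rw [if_neg h, if_neg (fun hc => h (hmem.2 hc))] ]
  split_ifs with h h1 h2 h3 h4 h5 h6 h7 h8 <;> simp_all <;> linarith

/-- the kernel term bound, used for both orientations -/
lemma T_bound {Z₀ R : ℝ} (hZ₀ : 0 < Z₀) (hR : 0 < R)
    (g : ℝ → ℝ → ENNReal) (W : ℝ → ENNReal) (I J : ℝ → ℝ → ENNReal)
    (hg : Measurable (Function.uncurry g)) (hW : Measurable W)
    (hI : Measurable (Function.uncurry I)) (hJ : Measurable (Function.uncurry J))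
    (hWfin : ∀ a, W a ≠ ⊤) (hIfin : ∀ a s, I a s ≠ ⊤) (hgfin : ∀ s z, g s z ≠ ⊤)
    (hprod : ∀ s ∈ Ioo (0:ℝ) R,
      (∫⁻ a in Ioo (0:ℝ) R, I a s * W a) * (∫⁻ b in Ioo (0:ℝ) R, J s b * W b)
        ≤ ENNReal.ofReal (R^3/4) * W s) :
    ∫⁻ p, (∫⁻ q, (∫⁻ s in Ioo (0:ℝ) R, I p.1 s * J s q.1 * g s p.2)
          * W p.1 * W q.1
        ∂((volume.restrict (Ioo (0:ℝ) R)).prod (volume.restrict (Ico (0:ℝ) Z₀))))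
      ∂((volume.restrict (Ioo (0:ℝ) R)).prod (volume.restrict (Ico (0:ℝ) Z₀)))
    ≤ ENNReal.ofReal Z₀ * (ENNReal.ofReal (R^3/4) *
        ∫⁻ s in Ioo (0:ℝ) R, W s * ∫⁻ z in Ico (0:ℝ) Z₀, g s z) := by
  rw [quad_bound (by simp [Real.volume_Ico]) g W I J hg hW hI hJ hWfin hIfin hgfin]
  have hZuniv : (volume.restrict (Ico (0:ℝ) Z₀)) univ = ENNReal.ofReal Z₀ := by
    simp [Real.volume_Ico]
  rw [hZuniv]
  apply mul_le_mul_right _ _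
  calc ∫⁻ s in Ioo (0:ℝ) R,
        (∫⁻ a in Ioo (0:ℝ) R, I a s * W a) *
          ((∫⁻ b in Ioo (0:ℝ) R, J s b * W b) * ∫⁻ z in Ico (0:ℝ) Z₀, g s z)
      ≤ ∫⁻ s in Ioo (0:ℝ) R,
          ENNReal.ofReal (R^3/4) * (W s * ∫⁻ z in Ico (0:ℝ) Z₀, g s z) := by
        apply setLIntegral_mono
        · apply Measurable.mul measurable_const
          apply Measurable.mul hW
          apply Measurable.lintegral_prod_right' (f := fun y : ℝ × ℝ => g y.1 y.2)
          exact hg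
        · intro s hs
          calc (∫⁻ a in Ioo (0:ℝ) R, I a s * W a) *
              ((∫⁻ b in Ioo (0:ℝ) R, J s b * W b) * ∫⁻ z in Ico (0:ℝ) Z₀, g s z)
              = ((∫⁻ a in Ioo (0:ℝ) R, I a s * W a) *
                (∫⁻ b in Ioo (0:ℝ) R, J s b * W b)) * ∫⁻ z in Ico (0:ℝ) Z₀, g s z := by
                ring
            _ ≤ (ENNReal.ofReal (R^3/4) * W s) * ∫⁻ z in Ico (0:ℝ) Z₀, g s z :=
                mul_le_mul_left (hprod s hs) _
            _ = ENNReal.ofReal (R^3/4) * (W s * ∫⁻ z in Ico (0:ℝ) Z₀, g s z) := by ring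
    _ = ENNReal.ofReal (R^3/4) * ∫⁻ s in Ioo (0:ℝ) R, W s * ∫⁻ z in Ico (0:ℝ) Z₀, g s z := by
        rw [lintegral_const_mul' _ _ ENNReal.ofReal_ne_top]

def I1e : ℝ → ℝ → ENNReal := fun a s => if a < s then 1 else 0
def J1e : ℝ → ℝ → ENNReal := fun s b => if s ≤ b then 1 else 0
def I2e : ℝ → ℝ → ENNReal := fun a s => if s ≤ a then 1 else 0
def J2e : ℝ → ℝ → ENNReal := fun s b => if b < s then 1 else 0
def gF (Ψ : ℝ → ℝ → ℝ) : ℝ → ℝ → ENNReal := fun s z => grF Ψ (s, z)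

lemma I1e_meas : Measurable (Function.uncurry I1e) :=
  Measurable.ite (measurableSet_lt measurable_fst measurable_snd) measurable_const measurable_const
lemma J1e_meas : Measurable (Function.uncurry J1e) :=
  Measurable.ite (measurableSet_le measurable_fst measurable_snd) measurable_const measurable_const
lemma I2e_meas : Measurable (Function.uncurry I2e) :=
  Measurable.ite (measurableSet_le measurable_snd measurable_fst) measurable_const measurable_const
lemma J2e_meas : Measurable (Function.uncurry J2e) :=
  Measurable.ite (measurableSet_lt measurable_snd measurable_fst) measurable_const measurable_const
lemma gF_meas {Ψ : ℝ → ℝ → ℝ}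
    (hΨ : ContDiffOn ℝ (⊤ : ℕ∞) (fun p : ℝ × ℝ => Ψ p.1 p.2) (Ioi 0 ×ˢ (univ : Set ℝ))) :
    Measurable (Function.uncurry (gF Ψ)) :=
  (grF_meas hΨ).comp (measurable_fst.prodMk measurable_snd)

def bb1 (Ψ : ℝ → ℝ → ℝ) (ζ₁ : ℝ → ℝ) (R : ℝ) : (ℝ × ℝ) × (ℝ × ℝ) → ENNReal := fun x =>
  (∫⁻ s in Ioo (0:ℝ) R, I1e x.1.1 s * J1e s x.2.1 * gF Ψ s x.1.2)
    * W1F ζ₁ R x.1.1 * W1F ζ₁ R x.2.1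
def bb2 (Ψ : ℝ → ℝ → ℝ) (ζ₁ : ℝ → ℝ) (R : ℝ) : (ℝ × ℝ) × (ℝ × ℝ) → ENNReal := fun x =>
  (∫⁻ s in Ioo (0:ℝ) R, I2e x.1.1 s * J2e s x.2.1 * gF Ψ s x.1.2)
    * W1F ζ₁ R x.1.1 * W1F ζ₁ R x.2.1
def bb3 (Ψ : ℝ → ℝ → ℝ) (ζ₁ : ℝ → ℝ) (Z₀ R : ℝ) : (ℝ × ℝ) × (ℝ × ℝ) → ENNReal := fun x =>
  W1F ζ₁ R x.1.1 * ((∫⁻ t in Ico (0:ℝ) Z₀, gzF Ψ (x.2.1, t)) * W1F ζ₁ R x.2.1)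

lemma kern_meas {Ψ : ℝ → ℝ → ℝ} {R : ℝ}
    (hΨ : ContDiffOn ℝ (⊤ : ℕ∞) (fun p : ℝ × ℝ => Ψ p.1 p.2) (Ioi 0 ×ˢ (univ : Set ℝ)))
    {I J : ℝ → ℝ → ENNReal}
    (hI : Measurable (Function.uncurry I)) (hJ : Measurable (Function.uncurry J)) :
    Measurable (fun x : (ℝ × ℝ) × (ℝ × ℝ) =>
      ∫⁻ s in Ioo (0:ℝ) R, I x.1.1 s * J s x.2.1 * gF Ψ s x.1.2) := by
  apply Measurable.lintegral_prod_right'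
    (f := fun y : ((ℝ × ℝ) × (ℝ × ℝ)) × ℝ => I y.1.1.1 y.2 * J y.2 y.1.2.1 * gF Ψ y.2 y.1.1.2)
  exact ((hI.comp (measurable_fst.fst.fst.prodMk measurable_snd)).mul
    (hJ.comp (measurable_snd.prodMk measurable_fst.snd.fst))).mul
    ((gF_meas hΨ).comp (measurable_snd.prodMk measurable_fst.fst.snd))

lemma bb1_meas {Ψ : ℝ → ℝ → ℝ} {ζ₁ : ℝ → ℝ} {R : ℝ}
    (hΨ : ContDiffOn ℝ (⊤ : ℕ∞) (fun p : ℝ × ℝ => Ψ p.1 p.2) (Ioi 0 ×ˢ (univ : Set ℝ)))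
    (hζc : Continuous ζ₁) : Measurable (bb1 Ψ ζ₁ R) :=
  ((kern_meas hΨ I1e_meas J1e_meas).mul
    ((W1F_meas hζc).comp measurable_fst.fst)).mul ((W1F_meas hζc).comp measurable_snd.fst)

lemma bb2_meas {Ψ : ℝ → ℝ → ℝ} {ζ₁ : ℝ → ℝ} {R : ℝ}
    (hΨ : ContDiffOn ℝ (⊤ : ℕ∞) (fun p : ℝ × ℝ => Ψ p.1 p.2) (Ioi 0 ×ˢ (univ : Set ℝ)))
    (hζc : Continuous ζ₁) : Measurable (bb2 Ψ ζ₁ R) :=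
  ((kern_meas hΨ I2e_meas J2e_meas).mul
    ((W1F_meas hζc).comp measurable_fst.fst)).mul ((W1F_meas hζc).comp measurable_snd.fst)

lemma tau_meas {Ψ : ℝ → ℝ → ℝ} {Z₀ : ℝ}
    (hΨ : ContDiffOn ℝ (⊤ : ℕ∞) (fun p : ℝ × ℝ => Ψ p.1 p.2) (Ioi 0 ×ˢ (univ : Set ℝ))) :
    Measurable (fun a : ℝ => ∫⁻ t in Ico (0:ℝ) Z₀, gzF Ψ (a, t)) := by
  apply Measurable.lintegral_prod_right' (f := fun y : ℝ × ℝ => gzF Ψ (y.1, y.2))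
  exact (gzF_meas hΨ).comp (measurable_fst.prodMk measurable_snd)

lemma bb3_meas {Ψ : ℝ → ℝ → ℝ} {ζ₁ : ℝ → ℝ} {Z₀ R : ℝ}
    (hΨ : ContDiffOn ℝ (⊤ : ℕ∞) (fun p : ℝ × ℝ => Ψ p.1 p.2) (Ioi 0 ×ˢ (univ : Set ℝ)))
    (hζc : Continuous ζ₁) : Measurable (bb3 Ψ ζ₁ Z₀ R) :=
  ((W1F_meas hζc).comp measurable_fst.fst).mul
    (((tau_meas hΨ).comp measurable_snd.fst).mul ((W1F_meas hζc).comp measurable_snd.fst))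

lemma pointwise_enn {Ψ : ℝ → ℝ → ℝ} {Z₀ R : ℝ} {ζ₁ : ℝ → ℝ}
    (hΨ : ContDiffOn ℝ (⊤ : ℕ∞) (fun p : ℝ × ℝ => Ψ p.1 p.2) (Ioi 0 ×ˢ (univ : Set ℝ)))
    (hZ₀ : 0 < Z₀) (hR0 : 0 < R)
    {x : (ℝ × ℝ) × (ℝ × ℝ)} (hx : x ∈ (DReg Z₀ R) ×ˢ (DReg Z₀ R)) :
    ENNReal.ofReal ((Ψ x.2.1 x.2.2 - Ψ x.1.1 x.1.2)^2
        * (ζ₁ (x.1.1/R)^2 * x.1.1) * (ζ₁ (x.2.1/R)^2 * x.2.1))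
      ≤ ENNReal.ofReal (2*R) * bb1 Ψ ζ₁ R x + ENNReal.ofReal (2*R) * bb2 Ψ ζ₁ R x
        + ENNReal.ofReal (2*Z₀) * bb3 Ψ ζ₁ Z₀ R x := by
  obtain ⟨hp, hq⟩ := hx
  set p := x.1 with hpd
  set q := x.2 with hqd
  have hp1 : 0 < p.1 := hp.1.1
  have hq1 : 0 < q.1 := hq.1.1
  have hw1 : 0 ≤ ζ₁ (p.1/R)^2 * p.1 := mul_nonneg (sq_nonneg _) hp1.le
  have hw2 : 0 ≤ ζ₁ (q.1/R)^2 * q.1 := mul_nonneg (sq_nonneg _) hq1.le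
  rw [ENNReal.ofReal_mul (mul_nonneg (sq_nonneg _) hw1), ENNReal.ofReal_mul (sq_nonneg _)]
  -- now : ofReal(sq) * W1F p.1 * W1F q.1 ≤ ...
  -- step : bound ofReal (sq)
  set Ir : ℝ := ∫ s in Ι p.1 q.1, (pdr2 Ψ s p.2)^2 with hIrd
  set Iz : ℝ := ∫ t in Ico (0:ℝ) Z₀, (pdz2 Ψ q.1 t)^2 with hIzd
  have hpb : (Ψ q.1 q.2 - Ψ p.1 p.2)^2 ≤ 2*R*Ir + 2*Z₀*Iz :=
    pointwise_bound hΨ hZ₀ hR0 hp hq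
  have hIr_nonneg : 0 ≤ Ir := setIntegral_nonneg measurableSet_uIoc (fun t _ => sq_nonneg _)
  have hIz_nonneg : 0 ≤ Iz := setIntegral_nonneg measurableSet_Ico (fun t _ => sq_nonneg _)
  -- continuity for integrability
  have huIccr : uIcc p.1 q.1 ⊆ Ioi (0:ℝ) := fun y hy => lt_of_lt_of_le (lt_min hp1 hq1) hy.1
  have hcontr : ContinuousOn (fun s => (pdr2 Ψ s p.2)^2) (uIcc p.1 q.1) := by
    have hcq : Continuous (fun s : ℝ => (s, p.2)) := continuous_id.prodMk continuous_const
    exact (((continuousOn_pdr2 hΨ).comp (hcq.continuousOn (s := uIcc p.1 q.1))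
      (fun y hy => ⟨huIccr hy, mem_univ _⟩))).pow 2
  have hcontz : ContinuousOn (fun t => (pdz2 Ψ q.1 t)^2) (Icc (0:ℝ) Z₀) := by
    have hcq : Continuous (fun t : ℝ => (q.1, t)) := continuous_const.prodMk continuous_id
    exact (((continuousOn_pdz2 hΨ).comp (hcq.continuousOn (s := Icc (0:ℝ) Z₀))
      (fun y _ => ⟨hq1, mem_univ _⟩))).pow 2
  have hIrInt : IntegrableOn (fun s => (pdr2 Ψ s p.2)^2) (Ι p.1 q.1) :=
    (hcontr.integrableOn_compact isCompact_uIcc).mono_set uIoc_subset_uIcc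
  have hIzInt : IntegrableOn (fun t => (pdz2 Ψ q.1 t)^2) (Ico (0:ℝ) Z₀) :=
    (hcontz.integrableOn_compact isCompact_Icc).mono_set Ico_subset_Icc_self
  have hsubr : Ι p.1 q.1 ⊆ Ioo (0:ℝ) R := by
    intro y hy
    exact ⟨lt_of_le_of_lt (le_min hp1.le hq1.le) hy.1,
      lt_of_le_of_lt hy.2 (max_lt hp.1.2 hq.1.2)⟩
  -- ofReal Ir = κ₁ + κ₂
  have hIr : ENNReal.ofReal Ir
      = (∫⁻ s in Ioo (0:ℝ) R, I1e p.1 s * J1e s q.1 * gF Ψ s p.2)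
        + (∫⁻ s in Ioo (0:ℝ) R, I2e p.1 s * J2e s q.1 * gF Ψ s p.2) := by
    rw [hIrd, ofReal_integral_eq_lintegral_ofReal hIrInt
      (Eventually.of_forall (fun t => sq_nonneg _))]
    have e1 : ∫⁻ s in Ι p.1 q.1, ENNReal.ofReal ((pdr2 Ψ s p.2)^2) ∂volume
        = ∫⁻ s in Ioo (0:ℝ) R,
            (Ι p.1 q.1).indicator (fun s => ENNReal.ofReal ((pdr2 Ψ s p.2)^2)) s := by
      rw [lintegral_indicator measurableSet_uIoc, Measure.restrict_restrict measurableSet_uIoc,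
        inter_eq_self_of_subset_left hsubr]
    rw [e1]
    have e2 : ∀ s ∈ Ioo (0:ℝ) R,
        (Ι p.1 q.1).indicator (fun s => ENNReal.ofReal ((pdr2 Ψ s p.2)^2)) s
          = I1e p.1 s * J1e s q.1 * gF Ψ s p.2 + I2e p.1 s * J2e s q.1 * gF Ψ s p.2 := by
      intro s hs
      have hgr : gF Ψ s p.2 = ENNReal.ofReal ((pdr2 Ψ s p.2)^2) := grF_eq hs.1
      have e3 : (Ι p.1 q.1).indicator (fun s => ENNReal.ofReal ((pdr2 Ψ s p.2)^2)) s
          = (Ι p.1 q.1).indicator (fun _ => (1:ENNReal)) s * gF Ψ s p.2 := by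
        by_cases h : s ∈ Ι p.1 q.1
        · rw [indicator_of_mem h, indicator_of_mem h, one_mul, hgr]
        · rw [indicator_of_notMem h, indicator_of_notMem h, zero_mul]
      rw [e3, ind_decomp, add_mul]
      rfl
    rw [setLIntegral_congr_fun measurableSet_Ioo e2]
    apply lintegral_add_left
    exact ((I1e_meas.comp (measurable_const.prodMk measurable_id)).mul
      (J1e_meas.comp (measurable_id.prodMk measurable_const))).mul
      ((gF_meas hΨ).comp (measurable_id.prodMk measurable_const))
  -- ofReal Iz = τ
  have hIz : ENNReal.ofReal Iz = ∫⁻ t in Ico (0:ℝ) Z₀, gzF Ψ (q.1, t) := by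
    rw [hIzd, ofReal_integral_eq_lintegral_ofReal hIzInt
      (Eventually.of_forall (fun t => sq_nonneg _))]
    apply setLIntegral_congr_fun measurableSet_Ico
    intro t _
    exact (gzF_eq (x := (q.1, t)) hq1).symm
  -- combine
  have hkey : ENNReal.ofReal ((Ψ q.1 q.2 - Ψ p.1 p.2)^2)
      ≤ ENNReal.ofReal (2*R) * (ENNReal.ofReal Ir)
        + ENNReal.ofReal (2*Z₀) * (ENNReal.ofReal Iz) := by
    calc ENNReal.ofReal ((Ψ q.1 q.2 - Ψ p.1 p.2)^2)
        ≤ ENNReal.ofReal (2*R*Ir + 2*Z₀*Iz) := ENNReal.ofReal_le_ofReal hpb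
      _ ≤ ENNReal.ofReal (2*R*Ir) + ENNReal.ofReal (2*Z₀*Iz) := ENNReal.ofReal_add_le
      _ = ENNReal.ofReal (2*R) * (ENNReal.ofReal Ir)
          + ENNReal.ofReal (2*Z₀) * (ENNReal.ofReal Iz) := by
          rw [ENNReal.ofReal_mul (by linarith : (0:ℝ) ≤ 2*R),
            ENNReal.ofReal_mul (by linarith : (0:ℝ) ≤ 2*Z₀)]
  calc ENNReal.ofReal ((Ψ q.1 q.2 - Ψ p.1 p.2)^2) * ENNReal.ofReal (ζ₁ (p.1/R)^2 * p.1)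
        * ENNReal.ofReal (ζ₁ (q.1/R)^2 * q.1)
      ≤ (ENNReal.ofReal (2*R) * (ENNReal.ofReal Ir)
          + ENNReal.ofReal (2*Z₀) * (ENNReal.ofReal Iz))
        * ENNReal.ofReal (ζ₁ (p.1/R)^2 * p.1) * ENNReal.ofReal (ζ₁ (q.1/R)^2 * q.1) :=
        mul_le_mul_left (mul_le_mul_left hkey _) _
    _ = ENNReal.ofReal (2*R) * bb1 Ψ ζ₁ R x + ENNReal.ofReal (2*R) * bb2 Ψ ζ₁ R x
        + ENNReal.ofReal (2*Z₀) * bb3 Ψ ζ₁ Z₀ R x := by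
        rw [hIr, hIz]
        unfold bb1 bb2 bb3 W1F
        rw [← hpd, ← hqd]
        ring

lemma coeff_bound {ζ₁ : ℝ → ℝ} {R s : ℝ} (hs : s ∈ Ioo (0:ℝ) R) :
    ENNReal.ofReal (s^2/2) * (ENNReal.ofReal (ζ₁ (s/R)^2) * ENNReal.ofReal (R^2/2))
      ≤ ENNReal.ofReal (R^3/4) * W1F ζ₁ R s := by
  have h1 := hs.1
  have h2 := hs.2
  have hR0 : (0:ℝ) < R := lt_trans h1 h2
  unfold W1F
  rw [← ENNReal.ofReal_mul (sq_nonneg _),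
    ← ENNReal.ofReal_mul (by positivity : (0:ℝ) ≤ s^2/2),
    ← ENNReal.ofReal_mul (by nlinarith [pow_pos hR0 3] : (0:ℝ) ≤ R^3/4)]
  apply ENNReal.ofReal_le_ofReal
  have key : 0 ≤ ζ₁ (s/R)^2 * s * (R^2 * (R - s)) :=
    mul_nonneg (mul_nonneg (sq_nonneg _) h1.le)
      (mul_nonneg (sq_nonneg _) (by linarith))
  nlinarith [key]

lemma main_bound {Ψ : ℝ → ℝ → ℝ} {Z₀ R : ℝ} {ζ₁ : ℝ → ℝ}
    (hΨ : ContDiffOn ℝ (⊤ : ℕ∞) (fun p : ℝ × ℝ => Ψ p.1 p.2) (Ioi 0 ×ˢ (univ : Set ℝ)))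
    (hζc : Continuous ζ₁) (hζ_anti : AntitoneOn ζ₁ (Ici 0))
    (hζ_range : ∀ x, ζ₁ x ∈ Icc (0:ℝ) 1) (hZ₀ : 0 < Z₀) (hR1 : 1 ≤ R) :
    ∫⁻ x in DReg Z₀ R ×ˢ DReg Z₀ R,
        ENNReal.ofReal ((Ψ x.2.1 x.2.2 - Ψ x.1.1 x.1.2)^2
          * (ζ₁ (x.1.1/R)^2 * x.1.1) * (ζ₁ (x.2.1/R)^2 * x.2.1))
      ≤ ENNReal.ofReal ((Z₀ + Z₀^3) * R^4) *
        ∫⁻ x in DReg Z₀ R, (grF Ψ x + gzF Ψ x) * W1F ζ₁ R x.1 := by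
  have hR0 : (0:ℝ) < R := lt_of_lt_of_le one_pos hR1
  have hD1 : (volume : Measure (ℝ×ℝ)).restrict (DReg Z₀ R)
      = (volume.restrict (Ioo (0:ℝ) R)).prod (volume.restrict (Ico (0:ℝ) Z₀)) := by
    rw [Measure.prod_restrict, ← Measure.volume_eq_prod, DReg]
  have hDD : (volume : Measure ((ℝ×ℝ)×(ℝ×ℝ))).restrict (DReg Z₀ R ×ˢ DReg Z₀ R)
      = ((volume : Measure (ℝ×ℝ)).restrict (DReg Z₀ R)).prod
          ((volume : Measure (ℝ×ℝ)).restrict (DReg Z₀ R)) := by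
    rw [Measure.prod_restrict, ← Measure.volume_eq_prod]
  have hZuniv : (volume.restrict (Ico (0:ℝ) Z₀)) univ = ENNReal.ofReal Z₀ := by
    simp [Real.volume_Ico]
  set Jr : ENNReal := ∫⁻ s in Ioo (0:ℝ) R, W1F ζ₁ R s * ∫⁻ z in Ico (0:ℝ) Z₀, gF Ψ s z
    with hJrdef
  set Jz : ENNReal := ∫⁻ s in Ioo (0:ℝ) R, W1F ζ₁ R s * ∫⁻ t in Ico (0:ℝ) Z₀, gzF Ψ (s, t)
    with hJzdef
  -- kernel product bounds
  have hprod1 : ∀ s ∈ Ioo (0:ℝ) R,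
      (∫⁻ a in Ioo (0:ℝ) R, I1e a s * W1F ζ₁ R a) *
        (∫⁻ b in Ioo (0:ℝ) R, J1e s b * W1F ζ₁ R b)
      ≤ ENNReal.ofReal (R^3/4) * W1F ζ₁ R s := by
    intro s hs
    have h1 : (∫⁻ a in Ioo (0:ℝ) R, I1e a s * W1F ζ₁ R a) ≤ ENNReal.ofReal (s^2/2) :=
      lint_lt_bound hζ_range
    have h2 : (∫⁻ b in Ioo (0:ℝ) R, J1e s b * W1F ζ₁ R b)
        ≤ ENNReal.ofReal (ζ₁ (s/R)^2) * ENNReal.ofReal (R^2/2) :=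
      lint_ge_bound hζc hζ_anti hζ_range hs.1 hR0
    exact le_trans (mul_le_mul' h1 h2) (coeff_bound hs)
  have hprod2 : ∀ s ∈ Ioo (0:ℝ) R,
      (∫⁻ a in Ioo (0:ℝ) R, I2e a s * W1F ζ₁ R a) *
        (∫⁻ b in Ioo (0:ℝ) R, J2e s b * W1F ζ₁ R b)
      ≤ ENNReal.ofReal (R^3/4) * W1F ζ₁ R s := by
    intro s hs
    have h1 : (∫⁻ a in Ioo (0:ℝ) R, I2e a s * W1F ζ₁ R a)
        ≤ ENNReal.ofReal (ζ₁ (s/R)^2) * ENNReal.ofReal (R^2/2) :=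
      lint_ge_bound hζc hζ_anti hζ_range hs.1 hR0
    have h2 : (∫⁻ b in Ioo (0:ℝ) R, J2e s b * W1F ζ₁ R b) ≤ ENNReal.ofReal (s^2/2) :=
      lint_lt_bound hζ_range
    refine le_trans (mul_le_mul' h1 h2) ?_
    rw [mul_comm]
    exact coeff_bound hs
  -- term bounds
  have hT1 : ∫⁻ x, bb1 Ψ ζ₁ R x
        ∂(((volume : Measure (ℝ×ℝ)).restrict (DReg Z₀ R)).prod
          ((volume : Measure (ℝ×ℝ)).restrict (DReg Z₀ R)))
      ≤ ENNReal.ofReal Z₀ * (ENNReal.ofReal (R^3/4) * Jr) := by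
    rw [hD1, lintegral_prod _ (by rw [← hD1]; exact (bb1_meas hΨ hζc).aemeasurable)]
    exact T_bound hZ₀ hR0 (gF Ψ) (W1F ζ₁ R) I1e J1e (gF_meas hΨ) (W1F_meas hζc)
      I1e_meas J1e_meas (fun a => ENNReal.ofReal_ne_top)
      (fun a s => by unfold I1e; split_ifs <;> simp)
      (fun s z => ENNReal.ofReal_ne_top) hprod1
  have hT2 : ∫⁻ x, bb2 Ψ ζ₁ R x
        ∂(((volume : Measure (ℝ×ℝ)).restrict (DReg Z₀ R)).prod
          ((volume : Measure (ℝ×ℝ)).restrict (DReg Z₀ R)))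
      ≤ ENNReal.ofReal Z₀ * (ENNReal.ofReal (R^3/4) * Jr) := by
    rw [hD1, lintegral_prod _ (by rw [← hD1]; exact (bb2_meas hΨ hζc).aemeasurable)]
    exact T_bound hZ₀ hR0 (gF Ψ) (W1F ζ₁ R) I2e J2e (gF_meas hΨ) (W1F_meas hζc)
      I2e_meas J2e_meas (fun a => ENNReal.ofReal_ne_top)
      (fun a s => by unfold I2e; split_ifs <;> simp)
      (fun s z => ENNReal.ofReal_ne_top) hprod2
  have hT3 : ∫⁻ x, bb3 Ψ ζ₁ Z₀ R x
        ∂(((volume : Measure (ℝ×ℝ)).restrict (DReg Z₀ R)).prod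
          ((volume : Measure (ℝ×ℝ)).restrict (DReg Z₀ R)))
      ≤ (ENNReal.ofReal (R^2/2) * ENNReal.ofReal Z₀) * (Jz * ENNReal.ofReal Z₀) := by
    have e1 : ∫⁻ x, bb3 Ψ ζ₁ Z₀ R x
          ∂(((volume : Measure (ℝ×ℝ)).restrict (DReg Z₀ R)).prod
            ((volume : Measure (ℝ×ℝ)).restrict (DReg Z₀ R)))
        = (∫⁻ p, W1F ζ₁ R p.1 ∂((volume : Measure (ℝ×ℝ)).restrict (DReg Z₀ R)))
          * ∫⁻ q, (∫⁻ t in Ico (0:ℝ) Z₀, gzF Ψ (q.1, t)) * W1F ζ₁ R q.1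
              ∂((volume : Measure (ℝ×ℝ)).restrict (DReg Z₀ R)) := by
      have hrfl : (fun x : (ℝ×ℝ)×(ℝ×ℝ) => bb3 Ψ ζ₁ Z₀ R x)
          = fun x => (fun p : ℝ×ℝ => W1F ζ₁ R p.1) x.1 *
              (fun q : ℝ×ℝ => (∫⁻ t in Ico (0:ℝ) Z₀, gzF Ψ (q.1, t)) * W1F ζ₁ R q.1) x.2 := rfl
      rw [hrfl]
      exact lintegral_prod_mul
        (f := fun p : ℝ×ℝ => W1F ζ₁ R p.1)
        (g := fun q : ℝ×ℝ => (∫⁻ t in Ico (0:ℝ) Z₀, gzF Ψ (q.1, t)) * W1F ζ₁ R q.1)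
        ((show Measurable fun p : ℝ×ℝ => W1F ζ₁ R p.1 from
          (W1F_meas hζc).comp measurable_fst).aemeasurable)
        ((show Measurable fun q : ℝ×ℝ =>
            (∫⁻ t in Ico (0:ℝ) Z₀, gzF Ψ (q.1, t)) * W1F ζ₁ R q.1 from
          ((tau_meas hΨ).comp measurable_fst).mul
            ((W1F_meas hζc).comp measurable_fst)).aemeasurable)
    rw [e1]
    apply mul_le_mul'
    · rw [hD1, lint_fst (W1F_meas hζc), hZuniv]
      exact mul_le_mul_left (lint_W1F_le hζ_range hR0.le) _
    · rw [hD1, lint_fst (f := fun a => (∫⁻ t in Ico (0:ℝ) Z₀, gzF Ψ (a, t)) * W1F ζ₁ R a) (((tau_meas hΨ)).mul (W1F_meas hζc)), hZuniv]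
      apply mul_le_mul_left
      apply le_of_eq
      apply lintegral_congr
      intro a
      rw [mul_comm]
  -- identification of Jr Jz with integrals over DReg
  have hJrD : ∫⁻ x in DReg Z₀ R, grF Ψ x * W1F ζ₁ R x.1 = Jr := by
    rw [hD1, lintegral_prod _ ((show Measurable fun x : ℝ×ℝ => grF Ψ x * W1F ζ₁ R x.1 from
      (grF_meas hΨ).mul ((W1F_meas hζc).comp measurable_fst)).aemeasurable)]
    apply lintegral_congr
    intro s
    rw [show (∫⁻ y in Ico (0:ℝ) Z₀, grF Ψ (s, y) * W1F ζ₁ R (s, y).1)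
        = ∫⁻ y in Ico (0:ℝ) Z₀, gF Ψ s y * W1F ζ₁ R s from rfl,
      lintegral_mul_const' (W1F ζ₁ R s) _
        (show W1F ζ₁ R s ≠ ⊤ from ENNReal.ofReal_ne_top),
      mul_comm]
  have hJzD : ∫⁻ x in DReg Z₀ R, gzF Ψ x * W1F ζ₁ R x.1 = Jz := by
    rw [hD1, lintegral_prod _ ((show Measurable fun x : ℝ×ℝ => gzF Ψ x * W1F ζ₁ R x.1 from
      (gzF_meas hΨ).mul ((W1F_meas hζc).comp measurable_fst)).aemeasurable)]
    apply lintegral_congr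
    intro s
    rw [show (∫⁻ y in Ico (0:ℝ) Z₀, gzF Ψ (s, y) * W1F ζ₁ R (s, y).1)
        = ∫⁻ y in Ico (0:ℝ) Z₀, gzF Ψ (s, y) * W1F ζ₁ R s from rfl,
      lintegral_mul_const' (W1F ζ₁ R s) _
        (show W1F ζ₁ R s ≠ ⊤ from ENNReal.ofReal_ne_top),
      mul_comm]
  -- main chain
  calc ∫⁻ x in DReg Z₀ R ×ˢ DReg Z₀ R,
        ENNReal.ofReal ((Ψ x.2.1 x.2.2 - Ψ x.1.1 x.1.2)^2
          * (ζ₁ (x.1.1/R)^2 * x.1.1) * (ζ₁ (x.2.1/R)^2 * x.2.1))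
      ≤ ∫⁻ x in DReg Z₀ R ×ˢ DReg Z₀ R,
          (ENNReal.ofReal (2*R) * bb1 Ψ ζ₁ R x + ENNReal.ofReal (2*R) * bb2 Ψ ζ₁ R x
            + ENNReal.ofReal (2*Z₀) * bb3 Ψ ζ₁ Z₀ R x) := by
        apply setLIntegral_mono
        · exact ((measurable_const.mul (bb1_meas hΨ hζc)).add
            (measurable_const.mul (bb2_meas hΨ hζc))).add
            (measurable_const.mul (bb3_meas hΨ hζc))
        · exact fun x hx => pointwise_enn hΨ hZ₀ hR0 hx
    _ = ENNReal.ofReal (2*R) * (∫⁻ x, bb1 Ψ ζ₁ R x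
          ∂(((volume : Measure (ℝ×ℝ)).restrict (DReg Z₀ R)).prod
            ((volume : Measure (ℝ×ℝ)).restrict (DReg Z₀ R))))
        + ENNReal.ofReal (2*R) * (∫⁻ x, bb2 Ψ ζ₁ R x
          ∂(((volume : Measure (ℝ×ℝ)).restrict (DReg Z₀ R)).prod
            ((volume : Measure (ℝ×ℝ)).restrict (DReg Z₀ R))))
        + ENNReal.ofReal (2*Z₀) * (∫⁻ x, bb3 Ψ ζ₁ Z₀ R x
          ∂(((volume : Measure (ℝ×ℝ)).restrict (DReg Z₀ R)).prod
            ((volume : Measure (ℝ×ℝ)).restrict (DReg Z₀ R)))) := by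
        rw [hDD]
        rw [lintegral_add_left (f := fun x => ENNReal.ofReal (2*R) * bb1 Ψ ζ₁ R x + ENNReal.ofReal (2*R) * bb2 Ψ ζ₁ R x) ((measurable_const.mul (bb1_meas hΨ hζc)).add
          (measurable_const.mul (bb2_meas hΨ hζc)))]
        rw [lintegral_add_left (f := fun x => ENNReal.ofReal (2*R) * bb1 Ψ ζ₁ R x) (measurable_const.mul (bb1_meas hΨ hζc))]
        rw [lintegral_const_mul' _ _ ENNReal.ofReal_ne_top,
          lintegral_const_mul' _ _ ENNReal.ofReal_ne_top,
          lintegral_const_mul' _ _ ENNReal.ofReal_ne_top]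
    _ ≤ ENNReal.ofReal (2*R) * (ENNReal.ofReal Z₀ * (ENNReal.ofReal (R^3/4) * Jr))
        + ENNReal.ofReal (2*R) * (ENNReal.ofReal Z₀ * (ENNReal.ofReal (R^3/4) * Jr))
        + ENNReal.ofReal (2*Z₀) * ((ENNReal.ofReal (R^2/2) * ENNReal.ofReal Z₀)
            * (Jz * ENNReal.ofReal Z₀)) := by
        exact add_le_add (add_le_add (mul_le_mul_right hT1 _) (mul_le_mul_right hT2 _))
          (mul_le_mul_right hT3 _)
    _ ≤ ENNReal.ofReal ((Z₀ + Z₀^3) * R^4) * (Jr + Jz) := by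
        have hc1 : ENNReal.ofReal (2*R) * (ENNReal.ofReal Z₀ * (ENNReal.ofReal (R^3/4) * Jr))
            = ENNReal.ofReal (Z₀ * R^4 / 2) * Jr := by
          rw [← mul_assoc, ← mul_assoc,
            ← ENNReal.ofReal_mul (by linarith : (0:ℝ) ≤ 2*R),
            ← ENNReal.ofReal_mul (by nlinarith : (0:ℝ) ≤ 2*R*Z₀)]
          congr 2
          ring
        have hc3 : ENNReal.ofReal (2*Z₀) * ((ENNReal.ofReal (R^2/2) * ENNReal.ofReal Z₀)
              * (Jz * ENNReal.ofReal Z₀))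
            = ENNReal.ofReal (Z₀^3 * R^2) * Jz := by
          rw [show ENNReal.ofReal (2*Z₀) * ((ENNReal.ofReal (R^2/2) * ENNReal.ofReal Z₀)
              * (Jz * ENNReal.ofReal Z₀))
            = (ENNReal.ofReal (2*Z₀) * ENNReal.ofReal (R^2/2) * ENNReal.ofReal Z₀
                * ENNReal.ofReal Z₀) * Jz by ring]
          rw [← ENNReal.ofReal_mul (by linarith : (0:ℝ) ≤ 2*Z₀),
            ← ENNReal.ofReal_mul (by nlinarith : (0:ℝ) ≤ 2*Z₀*(R^2/2)),
            ← ENNReal.ofReal_mul (by nlinarith [mul_pos (mul_pos (mul_pos two_pos hZ₀) (by nlinarith : (0:ℝ) < R^2/2)) hZ₀] : (0:ℝ) ≤ 2*Z₀*(R^2/2)*Z₀)]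
          congr 2
          ring
        rw [hc1, hc3]
        have hcoef1 : ENNReal.ofReal (Z₀ * R^4 / 2) * Jr + ENNReal.ofReal (Z₀ * R^4 / 2) * Jr
            = ENNReal.ofReal (Z₀ * R^4) * Jr := by
          rw [← add_mul, ← ENNReal.ofReal_add (by positivity) (by positivity)]
          congr 2
          ring
        calc ENNReal.ofReal (Z₀ * R^4 / 2) * Jr + ENNReal.ofReal (Z₀ * R^4 / 2) * Jr
              + ENNReal.ofReal (Z₀^3 * R^2) * Jz
            = ENNReal.ofReal (Z₀ * R^4) * Jr + ENNReal.ofReal (Z₀^3 * R^2) * Jz := by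
              rw [hcoef1]
          _ ≤ ENNReal.ofReal ((Z₀ + Z₀^3) * R^4) * Jr
              + ENNReal.ofReal ((Z₀ + Z₀^3) * R^4) * Jz := by
              apply add_le_add
              · apply mul_le_mul_left
                apply ENNReal.ofReal_le_ofReal
                nlinarith [pow_pos hZ₀ 3, pow_pos hR0 4]
              · apply mul_le_mul_left
                apply ENNReal.ofReal_le_ofReal
                have hR2 : R^2 ≤ R^4 := pow_le_pow_right₀ hR1 (by norm_num)
                nlinarith [pow_pos hZ₀ 3, hZ₀]
          _ = ENNReal.ofReal ((Z₀ + Z₀^3) * R^4) * (Jr + Jz) := by rw [mul_add]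
    _ = ENNReal.ofReal ((Z₀ + Z₀^3) * R^4) *
        ∫⁻ x in DReg Z₀ R, (grF Ψ x + gzF Ψ x) * W1F ζ₁ R x.1 := by
        congr 1
        have hm : Measurable fun x : ℝ×ℝ => grF Ψ x * W1F ζ₁ R x.1 :=
          (grF_meas hΨ).mul ((W1F_meas hζc).comp measurable_fst)
        rw [← hJrD, ← hJzD, ← lintegral_add_left hm]
        apply lintegral_congr
        intro x
        ring
/-- **Weighted Poincaré inequality in the periodic cylinder (inequality (3.10)).**
There is a constant `C` depending only on the cutoff profile `ζ₁` and on `Z₀`, such that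
for all `R ≥ 1` and all smooth `Z₀`-periodic `Ψ`,
`∫_{D_R} |Ψ − Ψ̄|² ζ_R² dμ ≤ C R² ∫_{D_R} |∇Ψ|² ζ_R² dμ` with `ζ_R(r) = ζ₁(r/R)` and
`Ψ̄` the `ζ_R² dμ`-average of `Ψ`. -/
theorem weighted_poincare
    (Z₀ : ℝ) (hZ₀ : 0 < Z₀)
    (ζ₁ : ℝ → ℝ) (hζ_smooth : ContDiff ℝ (⊤ : ℕ∞) ζ₁)
    (hζ_anti : AntitoneOn ζ₁ (Ici 0))
    (hζ_range : ∀ x, ζ₁ x ∈ Icc (0:ℝ) 1)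
    (hζ_one : ∀ x ∈ Icc (0:ℝ) (1/2), ζ₁ x = 1)
    (hζ_zero : ∀ x ≥ (1:ℝ), ζ₁ x = 0)
    (hζ_deriv : ∀ x, |deriv ζ₁ x| ≤ 4) :
    ∃ C > (0:ℝ), ∀ R : ℝ, ∀ Ψ : ℝ → ℝ → ℝ,
      R ≥ 1 →
      ContDiffOn ℝ (⊤ : ℕ∞) (fun p : ℝ × ℝ => Ψ p.1 p.2) (Ioi 0 ×ˢ (univ : Set ℝ)) →
      (∀ r z, Ψ r (z + Z₀) = Ψ r z) →
      IntegrableOn (fun p : ℝ × ℝ => Ψ p.1 p.2 * ζ₁ (p.1 / R) ^ 2 * p.1) (DReg Z₀ R) →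
      IntegrableOn (fun p : ℝ × ℝ => (Ψ p.1 p.2) ^ 2 * ζ₁ (p.1 / R) ^ 2 * p.1) (DReg Z₀ R) →
      IntegrableOn (fun p : ℝ × ℝ =>
        ((pdr2 Ψ p.1 p.2) ^ 2 + (pdz2 Ψ p.1 p.2) ^ 2) * ζ₁ (p.1 / R) ^ 2 * p.1)
        (DReg Z₀ R) →
      (let Ψbar : ℝ := (∫ p in DReg Z₀ R, ζ₁ (p.1 / R) ^ 2 * p.1)⁻¹ *
          ∫ p in DReg Z₀ R, Ψ p.1 p.2 * ζ₁ (p.1 / R) ^ 2 * p.1;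
        (∫ p in DReg Z₀ R, (Ψ p.1 p.2 - Ψbar) ^ 2 * ζ₁ (p.1 / R) ^ 2 * p.1) ≤
          C * R ^ 2 * ∫ p in DReg Z₀ R,
            ((pdr2 Ψ p.1 p.2) ^ 2 + (pdz2 Ψ p.1 p.2) ^ 2) * ζ₁ (p.1 / R) ^ 2 * p.1) := by
  refine ⟨4*(1+Z₀^2), by positivity, ?_⟩
  intro R Ψ hR1 hΨ hper hInt1 hInt2 hInt3
  intro Ψbar
  have hζc : Continuous ζ₁ := hζ_smooth.continuous
  have hR0 : (0:ℝ) < R := lt_of_lt_of_le one_pos hR1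
  have hDmeas : MeasurableSet (DReg Z₀ R) :=
    (measurableSet_Ioo.prod measurableSet_Ico : MeasurableSet (Ioo (0:ℝ) R ×ˢ Ico (0:ℝ) Z₀))
  have hDDmeas : MeasurableSet (DReg Z₀ R ×ˢ DReg Z₀ R) := hDmeas.prod hDmeas
  have hDD : (volume : Measure ((ℝ×ℝ)×(ℝ×ℝ))).restrict (DReg Z₀ R ×ˢ DReg Z₀ R)
      = ((volume : Measure (ℝ×ℝ)).restrict (DReg Z₀ R)).prod
          ((volume : Measure (ℝ×ℝ)).restrict (DReg Z₀ R)) := by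
    rw [Measure.prod_restrict, ← Measure.volume_eq_prod]
  -- weight function and basic integrands
  set f₀ : ℝ × ℝ → ℝ := fun p => ζ₁ (p.1/R)^2 * p.1 with hf₀
  set f₁ : ℝ × ℝ → ℝ := fun p => Ψ p.1 p.2 * (ζ₁ (p.1/R)^2 * p.1) with hf₁
  set f₂ : ℝ × ℝ → ℝ := fun p => (Ψ p.1 p.2)^2 * (ζ₁ (p.1/R)^2 * p.1) with hf₂
  have hwpos : ∀ p : ℝ × ℝ, p ∈ DReg Z₀ R → 0 ≤ f₀ p := by
    intro p hp
    exact mul_nonneg (sq_nonneg _) hp.1.1.le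
  have hf₀c : Continuous f₀ :=
    ((hζc.comp (continuous_fst.div_const R)).pow 2).mul continuous_fst
  have hf₀int : IntegrableOn f₀ (DReg Z₀ R) := by
    have hK : IsCompact (Icc (0:ℝ) R ×ˢ Icc (0:ℝ) Z₀) := isCompact_Icc.prod isCompact_Icc
    exact (hf₀c.continuousOn.integrableOn_compact hK).mono_set
      (prod_mono Ioo_subset_Icc_self Ico_subset_Icc_self)
  have hf₁int : IntegrableOn f₁ (DReg Z₀ R) :=
    hInt1.congr_fun (fun p _ => by simp only [hf₁]; ring) hDmeas
  have hf₂int : IntegrableOn f₂ (DReg Z₀ R) :=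
    hInt2.congr_fun (fun p _ => by simp only [hf₂]; ring) hDmeas
  set M : ℝ := ∫ p in DReg Z₀ R, ζ₁ (p.1 / R) ^ 2 * p.1 with hM
  set A : ℝ := ∫ p in DReg Z₀ R, f₁ p with hA
  set B : ℝ := ∫ p in DReg Z₀ R, f₂ p with hB
  have hMf₀ : M = ∫ p in DReg Z₀ R, f₀ p := rfl
  have hAeq : A = ∫ p in DReg Z₀ R, Ψ p.1 p.2 * ζ₁ (p.1 / R) ^ 2 * p.1 :=
    setIntegral_congr_fun hDmeas (fun p _ => by simp only [hf₁]; ring)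
  -- lower bound for M
  have hm_low : Z₀ * R^2/8 ≤ M := by
    have hsub : (Ioo (0:ℝ) (R/2) ×ˢ Ico (0:ℝ) Z₀) ⊆ DReg Z₀ R := by
      exact Set.prod_mono (Ioo_subset_Ioo le_rfl (by linarith)) (subset_refl _)
    have hD1' : (volume : Measure (ℝ×ℝ)).restrict (Ioo (0:ℝ) (R/2) ×ˢ Ico (0:ℝ) Z₀)
        = (volume.restrict (Ioo (0:ℝ) (R/2))).prod (volume.restrict (Ico (0:ℝ) Z₀)) := by
      rw [Measure.prod_restrict, ← Measure.volume_eq_prod]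
    have hcongr : ∫ p in Ioo (0:ℝ) (R/2) ×ˢ Ico (0:ℝ) Z₀, f₀ p
        = ∫ p in Ioo (0:ℝ) (R/2) ×ˢ Ico (0:ℝ) Z₀, p.1 := by
      apply setIntegral_congr_fun (measurableSet_Ioo.prod measurableSet_Ico)
      intro p hp
      have h1 : p.1/R ∈ Icc (0:ℝ) (1/2) := by
        constructor
        · exact div_nonneg hp.1.1.le hR0.le
        · rw [div_le_iff₀ hR0]; linarith [hp.1.2]
      simp only [hf₀]
      rw [hζ_one _ h1]
      ring
    have hval : ∫ p in Ioo (0:ℝ) (R/2) ×ˢ Ico (0:ℝ) Z₀, p.1 = Z₀ * R^2/8 := by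
      rw [hD1']
      rw [show (fun p : ℝ×ℝ => p.1) = fun p : ℝ×ℝ => (fun r : ℝ => r) p.1 * (fun _ : ℝ => (1:ℝ)) p.2
        from by funext p; simp]
      have hpm := integral_prod_mul (μ := volume.restrict (Ioo (0:ℝ) (R/2)))
        (ν := volume.restrict (Ico (0:ℝ) Z₀)) (f := fun r : ℝ => r) (g := fun _ : ℝ => (1:ℝ))
      rw [hpm]
      rw [integral_Ioo_id (by linarith : (0:ℝ) ≤ R/2)]
      rw [integral_const]
      simp [Real.volume_Ico, ENNReal.toReal_ofReal hZ₀.le]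
      rw [max_eq_left hZ₀.le]; ring
    have hmono : ∫ p in Ioo (0:ℝ) (R/2) ×ˢ Ico (0:ℝ) Z₀, f₀ p ≤ ∫ p in DReg Z₀ R, f₀ p := by
      apply setIntegral_mono_set hf₀int
      · rw [EventuallyLE]
        rw [ae_restrict_iff' hDmeas]
        exact Eventually.of_forall (fun p hp => hwpos p hp)
      · exact HasSubset.Subset.eventuallyLE hsub
    rw [hMf₀]
    calc Z₀ * R^2/8 = ∫ p in Ioo (0:ℝ) (R/2) ×ˢ Ico (0:ℝ) Z₀, p.1 := hval.symm
      _ = ∫ p in Ioo (0:ℝ) (R/2) ×ˢ Ico (0:ℝ) Z₀, f₀ p := hcongr.symm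
      _ ≤ ∫ p in DReg Z₀ R, f₀ p := hmono
  have hM_pos : 0 < M := lt_of_lt_of_le (by positivity) hm_low
  -- the double integral Q and its expansion
  set Q : ℝ := ∫ x in DReg Z₀ R ×ˢ DReg Z₀ R,
      (Ψ x.2.1 x.2.2 - Ψ x.1.1 x.1.2)^2
        * (ζ₁ (x.1.1/R)^2 * x.1.1) * (ζ₁ (x.2.1/R)^2 * x.2.1) with hQdef
  have hfun : (fun x : (ℝ×ℝ)×(ℝ×ℝ) => (Ψ x.2.1 x.2.2 - Ψ x.1.1 x.1.2)^2
        * (ζ₁ (x.1.1/R)^2 * x.1.1) * (ζ₁ (x.2.1/R)^2 * x.2.1))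
      = fun x => f₂ x.1 * f₀ x.2 + f₀ x.1 * f₂ x.2 - 2*(f₁ x.1 * f₁ x.2) := by
    funext x
    simp only [hf₀, hf₁, hf₂]
    ring
  have hint20 : Integrable (fun x : (ℝ×ℝ)×(ℝ×ℝ) => f₂ x.1 * f₀ x.2)
      (((volume : Measure (ℝ×ℝ)).restrict (DReg Z₀ R)).prod
        ((volume : Measure (ℝ×ℝ)).restrict (DReg Z₀ R))) := hf₂int.mul_prod hf₀int
  have hint02 : Integrable (fun x : (ℝ×ℝ)×(ℝ×ℝ) => f₀ x.1 * f₂ x.2)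
      (((volume : Measure (ℝ×ℝ)).restrict (DReg Z₀ R)).prod
        ((volume : Measure (ℝ×ℝ)).restrict (DReg Z₀ R))) := hf₀int.mul_prod hf₂int
  have hint11 : Integrable (fun x : (ℝ×ℝ)×(ℝ×ℝ) => f₁ x.1 * f₁ x.2)
      (((volume : Measure (ℝ×ℝ)).restrict (DReg Z₀ R)).prod
        ((volume : Measure (ℝ×ℝ)).restrict (DReg Z₀ R))) := hf₁int.mul_prod hf₁int
  have hint_sum : Integrable (fun x : (ℝ×ℝ)×(ℝ×ℝ) => f₂ x.1 * f₀ x.2 + f₀ x.1 * f₂ x.2)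
      (((volume : Measure (ℝ×ℝ)).restrict (DReg Z₀ R)).prod
        ((volume : Measure (ℝ×ℝ)).restrict (DReg Z₀ R))) := hint20.add hint02
  have hQ : Q = B * M + M * B - 2*(A*A) := by
    rw [hQdef, hfun, hDD]
    rw [integral_sub hint_sum (hint11.const_mul 2)]
    rw [integral_add hint20 hint02]
    rw [integral_prod_mul f₂ f₀, integral_prod_mul f₀ f₂, MeasureTheory.integral_const_mul,
      integral_prod_mul f₁ f₁]
  -- integrability and nonnegativity of the Q integrand
  have hQint : IntegrableOn (fun x : (ℝ×ℝ)×(ℝ×ℝ) =>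
      (Ψ x.2.1 x.2.2 - Ψ x.1.1 x.1.2)^2
        * (ζ₁ (x.1.1/R)^2 * x.1.1) * (ζ₁ (x.2.1/R)^2 * x.2.1))
      (DReg Z₀ R ×ˢ DReg Z₀ R) := by
    rw [hfun, IntegrableOn, hDD]
    exact (hint20.add hint02).sub (hint11.const_mul 2)
  have hQnn : 0 ≤ᵐ[(volume : Measure ((ℝ×ℝ)×(ℝ×ℝ))).restrict (DReg Z₀ R ×ˢ DReg Z₀ R)]
      (fun x : (ℝ×ℝ)×(ℝ×ℝ) => (Ψ x.2.1 x.2.2 - Ψ x.1.1 x.1.2)^2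
        * (ζ₁ (x.1.1/R)^2 * x.1.1) * (ζ₁ (x.2.1/R)^2 * x.2.1)) := by
    rw [EventuallyLE, ae_restrict_iff' hDDmeas]
    apply Eventually.of_forall
    intro x hx
    have h1 : 0 ≤ ζ₁ (x.1.1/R)^2 * x.1.1 := mul_nonneg (sq_nonneg _) hx.1.1.1.le
    have h2 : 0 ≤ ζ₁ (x.2.1/R)^2 * x.2.1 := mul_nonneg (sq_nonneg _) hx.2.1.1.le
    positivity
  -- the RHS integral
  set I3 : ℝ := ∫ p in DReg Z₀ R,
      ((pdr2 Ψ p.1 p.2) ^ 2 + (pdz2 Ψ p.1 p.2) ^ 2) * ζ₁ (p.1 / R) ^ 2 * p.1 with hI3def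
  have hI3nn : 0 ≤ I3 := by
    apply setIntegral_nonneg hDmeas
    intro p hp
    have h1 : 0 ≤ ζ₁ (p.1/R)^2 * p.1 := mul_nonneg (sq_nonneg _) hp.1.1.le
    have h2 : 0 ≤ (pdr2 Ψ p.1 p.2)^2 + (pdz2 Ψ p.1 p.2)^2 := by positivity
    calc (0:ℝ) ≤ ((pdr2 Ψ p.1 p.2)^2 + (pdz2 Ψ p.1 p.2)^2) * (ζ₁ (p.1/R)^2 * p.1) :=
          mul_nonneg h2 h1
      _ = ((pdr2 Ψ p.1 p.2) ^ 2 + (pdz2 Ψ p.1 p.2) ^ 2) * ζ₁ (p.1 / R) ^ 2 * p.1 := by ring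
  have hI3enn : ∫⁻ x in DReg Z₀ R, (grF Ψ x + gzF Ψ x) * W1F ζ₁ R x.1
      = ENNReal.ofReal I3 := by
    rw [hI3def, ofReal_integral_eq_lintegral_ofReal hInt3 (by
      rw [EventuallyLE, ae_restrict_iff' hDmeas]
      apply Eventually.of_forall
      intro p hp
      have h1 : 0 ≤ ζ₁ (p.1/R)^2 * p.1 := mul_nonneg (sq_nonneg _) hp.1.1.le
      have h2 : 0 ≤ (pdr2 Ψ p.1 p.2)^2 + (pdz2 Ψ p.1 p.2)^2 := by positivity
      calc (0:ℝ) ≤ ((pdr2 Ψ p.1 p.2)^2 + (pdz2 Ψ p.1 p.2)^2) * (ζ₁ (p.1/R)^2 * p.1) :=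
            mul_nonneg h2 h1
        _ = ((pdr2 Ψ p.1 p.2) ^ 2 + (pdz2 Ψ p.1 p.2) ^ 2) * ζ₁ (p.1 / R) ^ 2 * p.1 := by
            ring)]
    apply setLIntegral_congr_fun hDmeas
    intro p hp
    beta_reduce
    have h1 : 0 ≤ ζ₁ (p.1/R)^2 * p.1 := mul_nonneg (sq_nonneg _) hp.1.1.le
    have h2 : 0 ≤ (pdr2 Ψ p.1 p.2)^2 := sq_nonneg _
    rw [grF_eq hp.1.1, gzF_eq hp.1.1]
    rw [show ((pdr2 Ψ p.1 p.2) ^ 2 + (pdz2 Ψ p.1 p.2) ^ 2) * ζ₁ (p.1 / R) ^ 2 * p.1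
      = ((pdr2 Ψ p.1 p.2) ^ 2 + (pdz2 Ψ p.1 p.2) ^ 2) * (ζ₁ (p.1 / R) ^ 2 * p.1) from by ring]
    rw [ENNReal.ofReal_mul (by positivity), ENNReal.ofReal_add (sq_nonneg _) (sq_nonneg _)]
    rfl
  -- bound Q via the lintegral estimate
  have hQbound : Q ≤ (Z₀ + Z₀^3) * R^4 * I3 := by
    have hmb := main_bound hΨ hζc hζ_anti hζ_range hZ₀ hR1
    rw [hI3enn] at hmb
    have heq : Q = (∫⁻ x in DReg Z₀ R ×ˢ DReg Z₀ R,
        ENNReal.ofReal ((Ψ x.2.1 x.2.2 - Ψ x.1.1 x.1.2)^2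
          * (ζ₁ (x.1.1/R)^2 * x.1.1) * (ζ₁ (x.2.1/R)^2 * x.2.1))).toReal := by
      rw [hQdef]
      exact integral_eq_lintegral_of_nonneg_ae hQnn hQint.aestronglyMeasurable
    rw [heq]
    calc (∫⁻ x in DReg Z₀ R ×ˢ DReg Z₀ R,
        ENNReal.ofReal ((Ψ x.2.1 x.2.2 - Ψ x.1.1 x.1.2)^2
          * (ζ₁ (x.1.1/R)^2 * x.1.1) * (ζ₁ (x.2.1/R)^2 * x.2.1))).toReal
        ≤ (ENNReal.ofReal ((Z₀ + Z₀^3) * R^4) * ENNReal.ofReal I3).toReal := by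
          apply ENNReal.toReal_mono _ hmb
          exact ENNReal.mul_ne_top ENNReal.ofReal_ne_top ENNReal.ofReal_ne_top
      _ = (Z₀ + Z₀^3) * R^4 * I3 := by
          rw [← ENNReal.ofReal_mul (by positivity)]
          exact ENNReal.toReal_ofReal (by positivity)
  -- the variance identity
  have hLHSexp : ∫ p in DReg Z₀ R, (Ψ p.1 p.2 - Ψbar) ^ 2 * ζ₁ (p.1 / R) ^ 2 * p.1
      = B - 2*Ψbar*A + Ψbar^2*M := by
    rw [show (fun p : ℝ×ℝ => (Ψ p.1 p.2 - Ψbar) ^ 2 * ζ₁ (p.1 / R) ^ 2 * p.1)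
        = fun p => (f₂ p - 2*Ψbar*f₁ p) + Ψbar^2 * f₀ p from by
      funext p; simp only [hf₀, hf₁, hf₂]; ring]
    have hsub2 : Integrable (fun p : ℝ×ℝ => f₂ p - 2*Ψbar*f₁ p)
        ((volume : Measure (ℝ×ℝ)).restrict (DReg Z₀ R)) := hf₂int.sub (hf₁int.const_mul _)
    rw [integral_add hsub2 (hf₀int.const_mul _)]
    rw [integral_sub hf₂int (hf₁int.const_mul _)]
    rw [MeasureTheory.integral_const_mul, MeasureTheory.integral_const_mul]
  have hΨbar : Ψbar = M⁻¹ * A := by rw [hAeq]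
  -- final computation
  have hvar : ∫ p in DReg Z₀ R, (Ψ p.1 p.2 - Ψbar) ^ 2 * ζ₁ (p.1 / R) ^ 2 * p.1
      = (2*M)⁻¹ * Q := by
    rw [hLHSexp, hQ, hΨbar]
    field_simp
    ring
  rw [hvar]
  have hcoef : (2*M)⁻¹ * ((Z₀ + Z₀^3) * R^4) ≤ 4*(1+Z₀^2)*R^2 := by
    rw [inv_mul_le_iff₀ (by linarith)]
    have h1 : 4*(1+Z₀^2)*R^2*(2*(Z₀*R^2/8)) ≤ 4*(1+Z₀^2)*R^2*(2*M) := by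
      apply mul_le_mul_of_nonneg_left (by linarith) (by positivity)
    calc (Z₀ + Z₀^3) * R^4 = 4*(1+Z₀^2)*R^2*(2*(Z₀*R^2/8)) := by ring
      _ ≤ 4*(1+Z₀^2)*R^2*(2*M) := h1
      _ = 2*M*(4*(1+Z₀^2)*R^2) := by ring
  calc (2*M)⁻¹ * Q ≤ (2*M)⁻¹ * ((Z₀ + Z₀^3) * R^4 * I3) := by
        apply mul_le_mul_of_nonneg_left hQbound (by positivity)
    _ = ((2*M)⁻¹ * ((Z₀ + Z₀^3) * R^4)) * I3 := by ring
    _ ≤ (4*(1+Z₀^2)*R^2) * I3 := mul_le_mul_of_nonneg_right hcoef hI3nn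
    _ = 4*(1+Z₀^2) * R^2 * I3 := by ring
end
end

section
/- Riccati-type comparison lemma: Let a < b be real numbers, c > 0, m > 0, let W ⊆ [a,b] be Lebesgue measurable with measure |W| ≥ m, and let f : [a,b] → (0,∞) be differentiable with f'(t) ≤ −c·χ_W(t)·f(t)² for every t ∈ [a,b], where χ_W is the indicator function of W. Then f(b) ≤ 1/(c·m). -/
open MeasureTheory Real Set

/-! The reciprocal `1 / f` satisfies `(1 / f)' = -f' / f² ≥ c · χ_W`, so integrating over
`[a, b]` gives `1 / f b ≥ 1 / f a + c |W| > c m`. -/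

theorem intervalIntegral_indicator_one_of_subset_Icc {a b : ℝ} {W : Set ℝ}
    (hW : MeasurableSet W) (hW_sub : W ⊆ Icc a b) (hab : a ≤ b) :
    ∫ t in a..b, W.indicator 1 t = volume.real W := by
  rw [intervalIntegral.integral_of_le hab, ← integral_Icc_eq_integral_Ioc,
    integral_indicator_one hW, measureReal_restrict_apply hW, inter_eq_left.2 hW_sub]

theorem integral_le_inv_sub_inv_of_derivWithin_le {f g : ℝ → ℝ} {a b : ℝ} (hab : a ≤ b)
    (hf_pos : ∀ t ∈ Icc a b, 0 < f t) (hf_diff : DifferentiableOn ℝ f (Icc a b))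
    (hg : IntegrableOn g (Icc a b))
    (hf_deriv : ∀ t ∈ Ioo a b, derivWithin f (Icc a b) t ≤ -g t * f t ^ 2) :
    ∫ t in a..b, g t ≤ (f b)⁻¹ - (f a)⁻¹ := by
  refine intervalIntegral.integral_le_sub_of_hasDeriv_right_of_le
    (g' := fun t => -derivWithin f (Icc a b) t / f t ^ 2) hab
    (hf_diff.continuousOn.inv₀ fun t ht => (hf_pos t ht).ne') (fun t ht => ?_) hg (fun t ht => ?_)
  · have hft : HasDerivAt f (derivWithin f (Icc a b) t) t :=
      (hf_diff t (Ioo_subset_Icc_self ht)).hasDerivWithinAt.hasDerivAt (Icc_mem_nhds ht.1 ht.2)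
    exact (hft.inv (hf_pos t (Ioo_subset_Icc_self ht)).ne').hasDerivWithinAt
  · have hf2 : 0 < f t ^ 2 := pow_pos (hf_pos t (Ioo_subset_Icc_self ht)) 2
    rw [le_div_iff₀ hf2]
    linarith [hf_deriv t ht]

/-- **Riccati-type comparison lemma.** If `f : [a,b] → (0,∞)` is differentiable with
`f'(t) ≤ −c·χ_W(t)·f(t)²` on `[a,b]`, where `W ⊆ [a,b]` has Lebesgue measure at least
`m > 0` and `c > 0`, then `f(b) ≤ 1/(c·m)`. -/
theorem riccati_comparison
    (a b c m : ℝ) (W : Set ℝ) (f : ℝ → ℝ)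
    (hab : a < b) (hc : 0 < c) (hm : 0 < m)
    (hW_sub : W ⊆ Icc a b) (hW_meas : MeasurableSet W)
    (hW_vol : ENNReal.ofReal m ≤ volume W)
    (hf_pos : ∀ t ∈ Icc a b, 0 < f t)
    (hf_diff : DifferentiableOn ℝ f (Icc a b))
    (hf_deriv : ∀ t ∈ Icc a b,
      derivWithin f (Icc a b) t ≤ -c * W.indicator (fun _ => (1:ℝ)) t * (f t) ^ 2) :
    f b ≤ 1 / (c * m) := by
  have hW_fin : volume W ≠ ⊤ := (measure_mono hW_sub).trans_lt measure_Icc_lt_top |>.ne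
  have hm_le : m ≤ volume.real W := (ENNReal.ofReal_le_iff_le_toReal hW_fin).1 hW_vol
  have hind : IntegrableOn (W.indicator 1) (Icc a b) :=
    (integrableOn_const (C := (1 : ℝ)) measure_Icc_lt_top.ne).indicator hW_meas
  have hincr : ∫ t in a..b, c * W.indicator 1 t ≤ (f b)⁻¹ - (f a)⁻¹ :=
    integral_le_inv_sub_inv_of_derivWithin_le hab.le hf_pos hf_diff (hind.const_mul c)
      fun t ht => (hf_deriv t (Ioo_subset_Icc_self ht)).trans_eq (by simp only [Pi.one_def]; ring)
  rw [intervalIntegral.integral_const_mul,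
    intervalIntegral_indicator_one_of_subset_Icc hW_meas hW_sub hab.le] at hincr
  have hfa : 0 < (f a)⁻¹ := inv_pos.2 (hf_pos a ⟨le_rfl, hab.le⟩)
  have hcm : c * m ≤ (f b)⁻¹ :=
    calc c * m ≤ c * volume.real W := by gcongr
      _ ≤ (f b)⁻¹ := by linarith
  rw [one_div, ← inv_inv (f b)]
  exact inv_anti₀ (mul_pos hc hm) hcm
end

section
/- The supremum of the swirl is attained at spatial infinity (equation (4.4) of the paper): Let v_r, v_z, Γ : (0,∞)×ℝ×(−∞,0] → ℝ be smooth functions which are bounded together with all their partial derivatives, let Γ solve the swirl equation, and let Γ satisfy the axis condition. Then limsup_{r→∞} sup_{z∈ℝ, t≤0} |Γ(r,z,t)| = sup_{r>0, z∈ℝ, t≤0} |Γ(r,z,t)|. -/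
open MeasureTheory Real Set Filter

noncomputable section

/-- Partial derivative in the first (radial) variable. -/
def pdr (f : ℝ → ℝ → ℝ → ℝ) : ℝ → ℝ → ℝ → ℝ := fun r z t => deriv (fun s => f s z t) r

/-- Partial derivative in the second (axial) variable. -/
def pdz (f : ℝ → ℝ → ℝ → ℝ) : ℝ → ℝ → ℝ → ℝ := fun r z t => deriv (fun s => f r s t) z

/-- Partial derivative in the third (time) variable. -/
def pdt (f : ℝ → ℝ → ℝ → ℝ) : ℝ → ℝ → ℝ → ℝ := fun r z t => deriv (fun s => f r z s) t

/-- The space-time domain (0,∞) × ℝ × (−∞,0]. -/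
def dom3 : Set (ℝ × ℝ × ℝ) := Ioi 0 ×ˢ ((univ : Set ℝ) ×ˢ Iic 0)

/-- Uncurrying a function of three real variables. -/
def uncurry3 (f : ℝ → ℝ → ℝ → ℝ) : ℝ × ℝ × ℝ → ℝ := fun p => f p.1 p.2.1 p.2.2

namespace SwirlAux

lemma real_le_of_forall_pos_le_add {a b : ℝ} (h : ∀ ε, 0 < ε → a ≤ b + ε) : a ≤ b := by
  by_contra hab
  push_neg at hab
  have := h ((a - b)/2) (by linarith)
  linarith

lemma abs_sinh_le_cosh (x : ℝ) : |Real.sinh x| ≤ Real.cosh x := by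
  rw [abs_le]
  constructor
  · linarith only [Real.cosh_add_sinh x, Real.exp_pos x]
  · linarith only [Real.cosh_sub_sinh x, Real.exp_pos (-x)]

/-- If `g` has derivative `d` at `a` and is eventually `≤ g a` on the left,
then `0 ≤ d`. -/
lemma deriv_nonneg_of_left_max {g : ℝ → ℝ} {d a : ℝ} (hg : HasDerivAt g d a)
    (h : ∀ᶠ x in nhdsWithin a (Iio a), g x ≤ g a) : 0 ≤ d := by
  have hs : Tendsto (slope g a) (nhdsWithin a {a}ᶜ) (nhds d) :=
    hasDerivAt_iff_tendsto_slope.1 hg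
  have hs' : Tendsto (slope g a) (nhdsWithin a (Iio a)) (nhds d) :=
    hs.mono_left (nhdsWithin_mono a fun x hx => ne_of_lt hx)
  refine ge_of_tendsto hs' ?_
  filter_upwards [h, self_mem_nhdsWithin] with x hx hx'
  rw [slope_def_field]
  have hxa : x - a < 0 := by
    have : x < a := hx'
    linarith
  exact div_nonneg_iff.2 (Or.inr ⟨by linarith, hxa.le⟩)

lemma deriv_differentiableAt {g : ℝ → ℝ} {a : ℝ} (hg : ContDiffAt ℝ 2 g a) :
    DifferentiableAt ℝ (deriv g) a := by
  obtain ⟨u, hu, hcd⟩ := hg.contDiffOn le_rfl (by simp)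
  obtain ⟨V, hVu, hV, haV⟩ := mem_nhds_iff.1 hu
  have h1 : ContDiffOn ℝ 1 (deriv g) V := (hcd.mono hVu).deriv_of_isOpen hV (by norm_num)
  exact (h1.differentiableOn (by norm_num)).differentiableAt (hV.mem_nhds haV)

/-- Second derivative test: at a local maximum of a `C²` function the second
derivative is nonpositive. -/
lemma second_deriv_test {g : ℝ → ℝ} {a : ℝ} (hg : ContDiffAt ℝ 2 g a)
    (h : IsLocalMax g a) : deriv (deriv g) a ≤ 0 := by
  by_contra hc
  push_neg at hc
  obtain ⟨u, hu, hcd⟩ := hg.contDiffOn le_rfl (by simp)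
  obtain ⟨V, hVu, hV, haV⟩ := mem_nhds_iff.1 hu
  have hcdV : ContDiffOn ℝ 2 g V := hcd.mono hVu
  have hga : DifferentiableAt ℝ (deriv g) a := deriv_differentiableAt hg
  have h0 : deriv g a = 0 := h.deriv_eq_zero
  have hslope : Tendsto (slope (deriv g) a) (nhdsWithin a (Ioi a)) (nhds (deriv (deriv g) a)) :=
    (hasDerivAt_iff_tendsto_slope.1 hga.hasDerivAt).mono_left
      (nhdsWithin_mono a fun x hx => ne_of_gt hx)
  have hev : ∀ᶠ x in nhdsWithin a (Ioi a), 0 < deriv g x := by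
    filter_upwards [hslope.eventually (eventually_gt_nhds hc), self_mem_nhdsWithin] with x hx hx'
    rw [slope_def_field, h0, sub_zero] at hx
    have hxa : 0 < x - a := by
      have : a < x := hx'
      linarith
    by_contra hgx
    push_neg at hgx
    have : deriv g x / (x - a) ≤ 0 := div_nonpos_of_nonpos_of_nonneg hgx hxa.le
    linarith
  have hmemV : ∀ᶠ x in nhdsWithin a (Ioi a), x ∈ V :=
    eventually_nhdsWithin_of_eventually_nhds (hV.mem_nhds haV)
  have hle : ∀ᶠ x in nhdsWithin a (Ioi a), g x ≤ g a :=
    eventually_nhdsWithin_of_eventually_nhds h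
  have hall : {x | 0 < deriv g x ∧ x ∈ V ∧ g x ≤ g a} ∈ nhdsWithin a (Ioi a) :=
    hev.and (hmemV.and hle)
  obtain ⟨b, hb, hIoc⟩ := mem_nhdsGT_iff_exists_Ioc_subset.1 hall
  have hab : a < b := hb
  have hIccV : Icc a b ⊆ V := by
    intro x hx
    rcases eq_or_lt_of_le hx.1 with rfl | hlt
    · exact haV
    · exact (hIoc ⟨hlt, hx.2⟩).2.1
  have hmono : StrictMonoOn g (Icc a b) :=
    strictMonoOn_of_deriv_pos (convex_Icc a b) (hcdV.continuousOn.mono hIccV)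
      (fun x hx => by
        rw [interior_Icc] at hx
        exact (hIoc ⟨hx.1, hx.2.le⟩).1)
  have h1 : g a < g b := hmono ⟨le_rfl, hab.le⟩ ⟨hab.le, le_rfl⟩ hab
  have h2 : g b ≤ g a := (hIoc ⟨hab, le_rfl⟩).2.2
  linarith

lemma sliceR {n : WithTop ℕ∞} {u : ℝ → ℝ → ℝ → ℝ} {r z t : ℝ}
    (h : ContDiffAt ℝ n (uncurry3 u) (r, z, t)) : ContDiffAt ℝ n (fun s => u s z t) r :=
  h.comp r (contDiffAt_id.prodMk (contDiffAt_const.prodMk contDiffAt_const))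

lemma sliceZ {n : WithTop ℕ∞} {u : ℝ → ℝ → ℝ → ℝ} {r z t : ℝ}
    (h : ContDiffAt ℝ n (uncurry3 u) (r, z, t)) : ContDiffAt ℝ n (fun y => u r y t) z :=
  h.comp z (contDiffAt_const.prodMk (contDiffAt_id.prodMk contDiffAt_const))

lemma sliceT {n : WithTop ℕ∞} {u : ℝ → ℝ → ℝ → ℝ} {r z t : ℝ}
    (h : ContDiffAt ℝ n (uncurry3 u) (r, z, t)) : ContDiffAt ℝ n (fun τ => u r z τ) t :=
  h.comp (f := fun τ : ℝ => ((r, z, τ) : ℝ×ℝ×ℝ)) t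
    (contDiffAt_const.prodMk (contDiffAt_const.prodMk contDiffAt_id))

set_option maxHeartbeats 4000000 in
/-- The comparison/maximum-principle lemma: a bounded solution of the swirl equation
which vanishes at the axis and is `≤ L + ε` for large `r` satisfies `u ≤ L` everywhere. -/
lemma comparison (va vb u : ℝ → ℝ → ℝ → ℝ) (K M₀ M₁ L : ℝ)
    (hva : ∀ r z t, 0 < r → t < 0 → |va r z t| ≤ K)
    (hvb : ∀ r z t, 0 < r → t < 0 → |vb r z t| ≤ K)
    (hM₀ : ∀ r z t, 0 < r → t ≤ 0 → u r z t ≤ M₀)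
    (hM₀0 : 0 ≤ M₀)
    (hM₁ : ∀ r z t, 0 < r → t < 0 → |pdr u r z t| ≤ M₁)
    (hu : ∀ r z t, 0 < r → t < 0 → ContDiffAt ℝ 2 (uncurry3 u) (r, z, t))
    (heq : ∀ r z t, 0 < r → t ≤ 0 → pdt u r z t = pdr (pdr u) r z t + pdz (pdz u) r z t
        - va r z t * pdr u r z t - vb r z t * pdz u r z t - (1 / r) * pdr u r z t)
    (haxis : ∀ z t, t < 0 → Tendsto (fun r => u r z t) (nhdsWithin 0 (Ioi 0)) (nhds 0))
    (hL : 0 ≤ L)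
    (hR : ∀ ε, 0 < ε → ∃ R, 1 ≤ R ∧ ∀ r z t, R ≤ r → t ≤ 0 → u r z t ≤ L + ε) :
    ∀ r z t, 0 < r → t < 0 → u r z t ≤ L := by
  intro r₀ z₀ t₀ hr₀ ht₀
  have hK0 : 0 ≤ K := le_trans (abs_nonneg _) (hva 1 0 (-1) one_pos (by norm_num))
  have hM₁0 : 0 ≤ M₁ := le_trans (abs_nonneg _) (hM₁ 1 0 (-1) one_pos (by norm_num))
  -- the near-axis estimate
  have haxisbd : ∀ x z t, 0 < x → t < 0 → u x z t ≤ M₁ * x := by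
    intro x z t hx ht
    have hdiff : ∀ s ∈ Ioi (0:ℝ), HasDerivWithinAt (fun s' => u s' z t)
        (pdr u s z t) (Ioi 0) s := by
      intro s hs
      exact (((sliceR (hu s z t hs ht)).differentiableAt
        (by norm_num)).hasDerivAt).hasDerivWithinAt
    have hbound : ∀ s ∈ Ioi (0:ℝ), u x z t ≤ M₁ * |x - s| + |u s z t| := by
      intro s hs
      have h2 := (convex_Ioi (0:ℝ)).norm_image_sub_le_of_norm_hasDerivWithin_le hdiff
        (fun s hs => by rw [Real.norm_eq_abs]; exact hM₁ s z t hs ht) hs (mem_Ioi.2 hx)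
      rw [Real.norm_eq_abs, Real.norm_eq_abs] at h2
      have h3 : u x z t - u s z t ≤ |u x z t - u s z t| := le_abs_self _
      have h4 : u s z t ≤ |u s z t| := le_abs_self _
      linarith only [h2, h3, h4]
    have hid : Tendsto (fun s : ℝ => s) (nhdsWithin 0 (Ioi 0)) (nhds 0) :=
      tendsto_id.mono_left nhdsWithin_le_nhds
    have htend : Tendsto (fun s => M₁ * |x - s| + |u s z t|) (nhdsWithin 0 (Ioi 0))
        (nhds (M₁ * |x - 0| + |(0:ℝ)|)) :=
      (((tendsto_const_nhds.sub hid).abs).const_mul M₁).add (haxis z t ht).abs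
    have hfin : u x z t ≤ M₁ * |x - 0| + |(0:ℝ)| :=
      ge_of_tendsto htend (by
        filter_upwards [self_mem_nhdsWithin] with s hs
        exact hbound s hs)
    have : M₁ * |x - 0| + |(0:ℝ)| = M₁ * x := by
      rw [sub_zero, abs_of_pos hx, abs_zero, add_zero]
    linarith only [hfin, this]
  -- it suffices to prove `u r₀ z₀ t₀ ≤ L + 3ε` for all positive ε
  have hsuff : ∀ ε, 0 < ε → u r₀ z₀ t₀ ≤ L + 3 * ε := by
    intro ε hε
    obtain ⟨R₁, hR₁1, hRb⟩ := hR ε hε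
    set R : ℝ := max R₁ (r₀ + 1) with hRdef
    have hRr₀ : r₀ < R := lt_of_lt_of_le (by linarith) (le_max_right _ _)
    have hRR₁ : R₁ ≤ R := le_max_left _ _
    set δ : ℝ := min (ε / (M₁ + 1)) (r₀ / 2) with hδdef
    have hδ0 : 0 < δ := by
      rw [hδdef]
      exact lt_min (div_pos hε (by linarith)) (by linarith)
    have hδr₀ : δ < r₀ := lt_of_le_of_lt (min_le_right _ _) (by linarith)
    have hδR : δ < R := hδr₀.trans hRr₀
    have hδε : M₁ * δ ≤ ε := by
      have h1 : δ ≤ ε / (M₁ + 1) := min_le_left _ _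
      have h2 : M₁ * δ ≤ M₁ * (ε / (M₁ + 1)) := mul_le_mul_of_nonneg_left h1 hM₁0
      have h3 : M₁ * (ε / (M₁ + 1)) ≤ ε := by
        rw [mul_div_assoc', div_le_iff₀ (by linarith : (0:ℝ) < M₁ + 1)]
        nlinarith only [hε.le, hM₁0]
      linarith only [h2, h3]
    set m : ℝ := (δ + R)/2 with hmdef
    set W : ℝ := (R - δ)/2 with hWdef
    have hW0 : 0 < W := by rw [hWdef]; linarith
    set κ : ℝ := K + 1/δ + 1 with hκdef
    have hδinv : 0 < 1/δ := one_div_pos.2 hδ0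
    have hκ1 : 1 ≤ κ := by rw [hκdef]; linarith
    have hκ0 : 0 < κ := lt_of_lt_of_le one_pos hκ1
    set C₁ : ℝ := Real.cosh (κ*W) + 1 with hC₁def
    have hC₁2 : 2 ≤ C₁ := by
      have := Real.one_le_cosh (κ*W)
      rw [hC₁def]; linarith
    have hC₁0 : 0 < C₁ := by linarith
    set β : ℝ := 1/C₁ with hβdef
    have hβ0 : 0 < β := by rw [hβdef]; exact one_div_pos.2 hC₁0
    have hβC₁ : β * C₁ = 1 := by rw [hβdef]; field_simp
    set A : ℝ := M₀ + 1 with hAdef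
    have hA0 : 0 < A := by rw [hAdef]; linarith
    set μ : ℝ := K + 2 with hμdef
    have hμ0 : 0 < μ := by rw [hμdef]; linarith
    set η : ℝ := ε / (Real.exp (μ*t₀) * Real.cosh z₀) with hηdef
    have hη0 : 0 < η := by
      rw [hηdef]
      exact div_pos hε (mul_pos (Real.exp_pos _) (Real.cosh_pos _))
    have hηval : η * Real.exp (μ*t₀) * Real.cosh z₀ = ε := by
      rw [hηdef]
      have h1 := (Real.cosh_pos z₀).ne'
      have h2 := (Real.exp_pos (μ*t₀)).ne'
      field_simp
      try ring
    -- choose T very negative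
    have hTex : ∃ T, T < t₀ ∧ A * Real.exp (β*(T - t₀)) * C₁ ≤ ε := by
      have h1 : Tendsto (fun T : ℝ => T - t₀) atBot atBot :=
        tendsto_atBot_add_const_right _ _ tendsto_id
      have h2 : Tendsto (fun T : ℝ => β*(T - t₀)) atBot atBot := h1.const_mul_atBot hβ0
      have h3 : Tendsto (fun T : ℝ => A * Real.exp (β*(T - t₀)) * C₁) atBot (nhds 0) := by
        have h4 := Real.tendsto_exp_atBot.comp h2
        have h5 := (h4.const_mul A).mul_const C₁
        simpa using h5
      have h6 : ∀ᶠ T in atBot, A * Real.exp (β*(T - t₀)) * C₁ ≤ ε :=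
        h3.eventually (eventually_le_nhds hε)
      obtain ⟨T, hT1, hT2⟩ := (h6.and (eventually_lt_atBot t₀)).exists
      exact ⟨T, hT2, hT1⟩
    obtain ⟨T, hTt₀, hTbound⟩ := hTex
    -- choose Z large
    have hcosh_ge : ∀ x : ℝ, x/2 ≤ Real.cosh x := by
      intro x
      have h1 := Real.add_one_le_exp x
      have h2 := Real.exp_pos (-x)
      linarith only [Real.cosh_eq x, h1, h2]
    set Z : ℝ := max (|z₀| + 1) (2*(M₀+1)/(η*Real.exp (μ*T))) with hZdef
    have hZz₀ : |z₀| < Z := lt_of_lt_of_le (by linarith) (le_max_left _ _)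
    have hZ0 : 0 < Z := lt_of_le_of_lt (abs_nonneg z₀) hZz₀
    have hZbound : M₀ + 1 ≤ η * Real.exp (μ*T) * Real.cosh Z := by
      have hpos : 0 < η*Real.exp (μ*T) := mul_pos hη0 (Real.exp_pos _)
      have h1 : 2*(M₀+1)/(η*Real.exp (μ*T)) ≤ Z := le_max_right _ _
      rw [div_le_iff₀ hpos] at h1
      have h2 : Z/2 ≤ Real.cosh Z := hcosh_ge Z
      linarith only [mul_le_mul_of_nonneg_left h2 hpos.le, h1]
    clear_value R δ m W κ C₁ β A μ η Z
    -- the barrier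
    set Ψ : ℝ → ℝ → ℝ → ℝ := fun r z t => L + ε + A * Real.exp (β*(T - t)) *
        (C₁ - Real.cosh (κ*(r - m))) + η * Real.exp (μ*t) * Real.cosh z with hΨdef
    set F : ℝ × ℝ × ℝ → ℝ := fun p => u p.1 p.2.1 p.2.2 - Ψ p.1 p.2.1 p.2.2 with hFdef
    have hΨval : ∀ x y τ : ℝ, Ψ x y τ = L + ε + A * Real.exp (β*(T - τ)) *
        (C₁ - Real.cosh (κ*(x - m))) + η * Real.exp (μ*τ) * Real.cosh y := by
      intro x y τ
      rw [hΨdef]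
    have hFval : ∀ x y τ : ℝ, F (x, y, τ) = u x y τ - Ψ x y τ := by
      intro x y τ
      rw [hFdef]
    -- main claim
    have main : F (r₀, z₀, t₀) ≤ 0 := by
      by_contra hFpos
      push_neg at hFpos
      set D : Set (ℝ×ℝ×ℝ) := Icc δ R ×ˢ Icc (-Z) Z ×ˢ Icc T t₀ with hDdef
      have hmemD : ∀ {s y τ : ℝ}, δ ≤ s → s ≤ R → -Z ≤ y → y ≤ Z → T ≤ τ → τ ≤ t₀ →
          ((s,y,τ) : ℝ×ℝ×ℝ) ∈ D := by
        intro s y τ h1 h2 h3 h4 h5 h6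
        rw [hDdef]
        exact ⟨⟨h1, h2⟩, ⟨h3, h4⟩, ⟨h5, h6⟩⟩
      have hr₀D : ((r₀,z₀,t₀) : ℝ×ℝ×ℝ) ∈ D := by
        have h1 := abs_le.1 hZz₀.le
        exact hmemD hδr₀.le hRr₀.le h1.1 h1.2 hTt₀.le le_rfl
      have hDc : IsCompact D := isCompact_Icc.prod (isCompact_Icc.prod isCompact_Icc)
      have hFcont : ContinuousOn F D := by
        rw [hFdef]
        apply ContinuousOn.sub
        · intro p hp
          rw [hDdef] at hp
          have hp1 : 0 < p.1 := lt_of_lt_of_le hδ0 hp.1.1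
          have hp2 : p.2.2 < 0 := lt_of_le_of_lt hp.2.2.2 ht₀
          exact ((hu p.1 p.2.1 p.2.2 hp1 hp2).continuousAt).continuousWithinAt
        · apply Continuous.continuousOn
          simp only [hΨval]
          fun_prop
      obtain ⟨p, hpD, hpmax⟩ := hDc.exists_isMaxOn ⟨_, hr₀D⟩ hFcont
      obtain ⟨a, b, c⟩ := p
      have hFp : 0 < F (a,b,c) := lt_of_lt_of_le hFpos (hpmax hr₀D)
      rw [hDdef] at hpD
      simp only [Set.mem_prod, Set.mem_Icc] at hpD
      obtain ⟨⟨haδ, haR⟩, ⟨hbZ1, hbZ2⟩, hcT, hct₀⟩ := hpD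
      have ha0 : 0 < a := lt_of_lt_of_le hδ0 haδ
      have hc0 : c < 0 := lt_of_le_of_lt hct₀ ht₀
      -- generic facts at the max point
      have ham : |a - m| ≤ W := by
        rw [abs_le]
        have hm' : m = (δ + R)/2 := hmdef
        have hW' : W = (R - δ)/2 := hWdef
        constructor <;> linarith
      have hch : Real.cosh (κ*(a - m)) ≤ C₁ - 1 := by
        have h2 : |κ*(a - m)| ≤ |κ*W| := by
          rw [abs_mul, abs_mul, abs_of_pos hκ0, abs_of_pos hW0]
          exact mul_le_mul_of_nonneg_left ham hκ0.le
        have h3 : Real.cosh (κ*(a-m)) ≤ Real.cosh (κ*W) := Real.cosh_le_cosh.2 h2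
        rw [hC₁def]
        linarith
      have hch1 : 1 ≤ Real.cosh (κ*(a - m)) := Real.one_le_cosh _
      have hcz1 : 1 ≤ Real.cosh b := Real.one_le_cosh _
      have hEβ0 : 0 < Real.exp (β*(T - c)) := Real.exp_pos _
      have hEμ0 : 0 < Real.exp (μ*c) := Real.exp_pos _
      have tA : 0 ≤ A * Real.exp (β*(T - c)) * (C₁ - Real.cosh (κ*(a - m))) :=
        mul_nonneg (mul_pos hA0 hEβ0).le (by linarith only [hch, hC₁2])
      have tη : 0 < η * Real.exp (μ*c) * Real.cosh b :=
        mul_pos (mul_pos hη0 hEμ0) (Real.cosh_pos b)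
      have hΨbase : L + ε ≤ Ψ a b c := by
        rw [hΨval]
        linarith only [tA, tη]
      have hFc : u a b c ≤ Ψ a b c → False := by
        intro h
        rw [hFval] at hFp
        linarith only [h, hFp]
      -- case: b on the lateral z-boundary
      have hZcase : Real.cosh b = Real.cosh Z → False := by
        intro cosb
        apply hFc
        have h1 : u a b c ≤ M₀ := hM₀ a b c ha0 hc0.le
        have hEμT : Real.exp (μ*T) ≤ Real.exp (μ*c) :=
          Real.exp_le_exp.2 (mul_le_mul_of_nonneg_left hcT hμ0.le)
        have h2 : M₀ + 1 ≤ η * Real.exp (μ*c) * Real.cosh b := by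
          rw [cosb]
          have h3 : η * Real.exp (μ*T) ≤ η * Real.exp (μ*c) :=
            mul_le_mul_of_nonneg_left hEμT hη0.le
          have h4 : η * Real.exp (μ*T) * Real.cosh Z ≤ η * Real.exp (μ*c) * Real.cosh Z :=
            mul_le_mul_of_nonneg_right h3 (Real.cosh_pos Z).le
          linarith only [hZbound, h4]
        rw [hΨval]
        linarith only [h1, h2, tA, hL, hε.le]
      -- boundary cases
      rcases eq_or_lt_of_le haδ with hae | haδ'
      · -- a = δ : near the axis
        have h1 : M₁ * a ≤ ε := by rw [← hae]; exact hδε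
        have h2 : u a b c ≤ ε := le_trans (haxisbd a b c ha0 hc0) h1
        exact hFc (by linarith only [h2, hΨbase, hL])
      rcases eq_or_lt_of_le haR with hae | haR'
      · -- a = R : the outer boundary
        have h1 : u a b c ≤ L + ε := hRb a b c (by rw [hae]; exact hRR₁) hc0.le
        exact hFc (h1.trans hΨbase)
      rcases eq_or_lt_of_le hbZ1 with hbe | hbZ1'
      · exact hZcase (by rw [← hbe, Real.cosh_neg])
      rcases eq_or_lt_of_le hbZ2 with hbe | hbZ2'
      · exact hZcase (by rw [hbe])
      rcases eq_or_lt_of_le hcT with hce | hcT'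
      · -- c = T : the initial time
        apply hFc
        have hEβ1 : Real.exp (β*(T - c)) = 1 := by
          rw [hce, sub_self, mul_zero, Real.exp_zero]
        have h1 : u a b c ≤ M₀ := hM₀ a b c ha0 hc0.le
        have h2 : A ≤ A * Real.exp (β*(T - c)) * (C₁ - Real.cosh (κ*(a - m))) := by
          rw [hEβ1]
          nlinarith only [hA0, hch]
        have hA' : A = M₀ + 1 := hAdef
        rw [hΨval]
        linarith only [h1, h2, hA', tη, hL, hε.le]
      -- interior case
      have hcd := hu a b c ha0 hc0
      -- r-direction
      have hΨr : ∀ s : ℝ, HasDerivAt (fun x => Ψ x b c)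
          (A * Real.exp (β*(T - c)) * -(Real.sinh (κ*(s - m)) * (κ * 1))) s := by
        intro s
        have h1 : HasDerivAt (fun x : ℝ => κ*(x - m)) (κ * 1) s :=
          ((hasDerivAt_id s).sub_const m).const_mul κ
        have h2 := h1.cosh
        have h3 := h2.const_sub C₁
        have h4 := h3.const_mul (A * Real.exp (β*(T - c)))
        have h5 := (h4.const_add (L + ε)).add_const (η * Real.exp (μ*c) * Real.cosh b)
        simp only [hΨval]
        exact h5
      have hdur : ∀ s, 0 < s → DifferentiableAt ℝ (fun x => u x b c) s := fun s hs =>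
        (sliceR (hu s b c hs hc0)).differentiableAt (by norm_num)
      have hevr : ∀ᶠ s in nhds a, u s b c - Ψ s b c ≤ u a b c - Ψ a b c := by
        filter_upwards [Ioo_mem_nhds haδ' haR'] with s hs
        have h1 := hpmax (hmemD hs.1.le hs.2.le hbZ1 hbZ2 hcT hct₀)
        rw [hFval] at h1
        exact h1
      have hmaxr : IsLocalMax (fun s => u s b c - Ψ s b c) a := hevr
      have hf1 : pdr u a b c = A * Real.exp (β*(T - c)) *
          -(Real.sinh (κ*(a - m)) * (κ * 1)) := by
        have h0 := hmaxr.deriv_eq_zero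
        have hder : deriv (fun s => u s b c - Ψ s b c) a = pdr u a b c -
            A * Real.exp (β*(T - c)) * -(Real.sinh (κ*(a - m)) * (κ * 1)) := by
          rw [deriv_fun_sub (hdur a ha0) (hΨr a).differentiableAt, (hΨr a).deriv]
          rfl
        rw [hder] at h0
        linarith only [h0]
      have hcd2r : ContDiffAt ℝ 2 (fun s => u s b c - Ψ s b c) a := by
        apply (sliceR hcd).sub
        have h : ContDiff ℝ 2 (fun s : ℝ => Ψ s b c) := by
          simp only [hΨval]
          exact (contDiff_const.add (contDiff_const.mul (contDiff_const.sub
            ((contDiff_const.mul (contDiff_id.sub contDiff_const)).cosh)))).add contDiff_const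
        exact h.contDiffAt
      have hsec := second_deriv_test hcd2r hmaxr
      have hevd : deriv (fun s => u s b c - Ψ s b c) =ᶠ[nhds a]
          (fun s => pdr u s b c - A * Real.exp (β*(T - c)) *
            -(Real.sinh (κ*(s - m)) * (κ * 1))) := by
        filter_upwards [Ioi_mem_nhds ha0] with s hs
        rw [deriv_fun_sub (hdur s hs) (hΨr s).differentiableAt, (hΨr s).deriv]
        rfl
      have hrw := hevd.deriv_eq
      have hdd : HasDerivAt (fun s => A * Real.exp (β*(T - c)) *
            -(Real.sinh (κ*(s - m)) * (κ * 1)))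
          (A * Real.exp (β*(T - c)) * -(Real.cosh (κ*(a - m)) * (κ*1) * (κ * 1))) a := by
        have h1 : HasDerivAt (fun x : ℝ => κ*(x - m)) (κ * 1) a :=
          ((hasDerivAt_id a).sub_const m).const_mul κ
        exact ((h1.sinh.mul_const (κ*1)).neg).const_mul (A * Real.exp (β*(T - c)))
      have hdiff2r : DifferentiableAt ℝ (fun s => pdr u s b c) a :=
        deriv_differentiableAt (sliceR hcd)
      have hf3 : pdr (pdr u) a b c ≤ A * Real.exp (β*(T - c)) *
          -(Real.cosh (κ*(a - m)) * (κ*1) * (κ * 1)) := by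
        have h5 : deriv (fun s => pdr u s b c - A * Real.exp (β*(T - c)) *
            -(Real.sinh (κ*(s - m)) * (κ * 1))) a
            = pdr (pdr u) a b c - A * Real.exp (β*(T - c)) *
              -(Real.cosh (κ*(a - m)) * (κ*1) * (κ * 1)) := by
          rw [deriv_fun_sub hdiff2r hdd.differentiableAt, hdd.deriv]
          rfl
        rw [hrw, h5] at hsec
        linarith only [hsec]
      -- z-direction
      have hduz : ∀ y : ℝ, DifferentiableAt ℝ (fun x => u a x c) y := fun y =>
        (sliceZ (hu a y c ha0 hc0)).differentiableAt (by norm_num)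
      have hΨz : ∀ y : ℝ, HasDerivAt (fun x => Ψ a x c)
          (η * Real.exp (μ*c) * Real.sinh y) y := by
        intro y
        have h1 := (Real.hasDerivAt_cosh y).const_mul (η * Real.exp (μ*c))
        have h2 := h1.const_add (L + ε + A * Real.exp (β*(T - c)) *
          (C₁ - Real.cosh (κ*(a - m))))
        simp only [hΨval]
        exact h2
      have hevz : ∀ᶠ y in nhds b, u a y c - Ψ a y c ≤ u a b c - Ψ a b c := by
        filter_upwards [Ioo_mem_nhds hbZ1' hbZ2'] with y hy
        have h1 := hpmax (hmemD haδ haR hy.1.le hy.2.le hcT hct₀)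
        rw [hFval] at h1
        exact h1
      have hmaxz : IsLocalMax (fun y => u a y c - Ψ a y c) b := hevz
      have hf2 : pdz u a b c = η * Real.exp (μ*c) * Real.sinh b := by
        have h0 := hmaxz.deriv_eq_zero
        have hder : deriv (fun y => u a y c - Ψ a y c) b = pdz u a b c -
            η * Real.exp (μ*c) * Real.sinh b := by
          rw [deriv_fun_sub (hduz b) (hΨz b).differentiableAt, (hΨz b).deriv]
          rfl
        rw [hder] at h0
        linarith only [h0]
      have hcd2z : ContDiffAt ℝ 2 (fun y => u a y c - Ψ a y c) b := by
        apply (sliceZ hcd).sub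
        have h : ContDiff ℝ 2 (fun y : ℝ => Ψ a y c) := by
          simp only [hΨval]
          exact contDiff_const.add (contDiff_const.mul Real.contDiff_cosh)
        exact h.contDiffAt
      have hsecz := second_deriv_test hcd2z hmaxz
      have hevdz : deriv (fun y => u a y c - Ψ a y c) =ᶠ[nhds b]
          (fun y => pdz u a y c - η * Real.exp (μ*c) * Real.sinh y) :=
        Filter.Eventually.of_forall (fun y => by
          rw [deriv_fun_sub (hduz y) (hΨz y).differentiableAt, (hΨz y).deriv]
          rfl)
      have hrwz := hevdz.deriv_eq
      have hddz : HasDerivAt (fun y => η * Real.exp (μ*c) * Real.sinh y)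
          (η * Real.exp (μ*c) * Real.cosh b) b :=
        (Real.hasDerivAt_sinh b).const_mul (η * Real.exp (μ*c))
      have hdiff2z : DifferentiableAt ℝ (fun y => pdz u a y c) b :=
        deriv_differentiableAt (sliceZ hcd)
      have hf4 : pdz (pdz u) a b c ≤ η * Real.exp (μ*c) * Real.cosh b := by
        have h5 : deriv (fun y => pdz u a y c - η * Real.exp (μ*c) * Real.sinh y) b
            = pdz (pdz u) a b c - η * Real.exp (μ*c) * Real.cosh b := by
          rw [deriv_fun_sub hdiff2z hddz.differentiableAt, hddz.deriv]
          rfl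
        rw [hrwz, h5] at hsecz
        linarith only [hsecz]
      -- t-direction
      have hΨt : HasDerivAt (fun τ => Ψ a b τ)
          (A * (Real.exp (β*(T - c)) * (β * -1)) * (C₁ - Real.cosh (κ*(a - m)))
            + η * (Real.exp (μ*c) * (μ * 1)) * Real.cosh b) c := by
        have h1 : HasDerivAt (fun τ : ℝ => β*(T - τ)) (β * -1) c :=
          ((hasDerivAt_id c).const_sub T).const_mul β
        have h4 := ((h1.exp.const_mul A).mul_const (C₁ - Real.cosh (κ*(a - m))))
        have h5 : HasDerivAt (fun τ : ℝ => μ*τ) (μ * 1) c := (hasDerivAt_id c).const_mul μ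
        have h6 := (h5.exp.const_mul η).mul_const (Real.cosh b)
        have h7 := (h4.const_add (L + ε)).add h6
        simp only [hΨval]
        exact h7
      have hdut : DifferentiableAt ℝ (fun τ => u a b τ) c :=
        (sliceT hcd).differentiableAt (by norm_num)
      have hFt : HasDerivAt (fun τ => u a b τ - Ψ a b τ)
          (pdt u a b c - (A * (Real.exp (β*(T - c)) * (β * -1)) * (C₁ - Real.cosh (κ*(a - m)))
            + η * (Real.exp (μ*c) * (μ * 1)) * Real.cosh b)) c :=
        hdut.hasDerivAt.sub hΨt
      have hleft : ∀ᶠ τ in nhdsWithin c (Iio c), u a b τ - Ψ a b τ ≤ u a b c - Ψ a b c := by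
        filter_upwards [Ioo_mem_nhdsLT hcT'] with τ hτ
        have h1 := hpmax (hmemD haδ haR hbZ1 hbZ2 hτ.1.le (hτ.2.le.trans hct₀))
        rw [hFval] at h1
        exact h1
      have hf5 := deriv_nonneg_of_left_max hFt hleft
      -- combine with the equation
      have hfeq := heq a b c ha0 hc0.le
      rw [hf1, hf2] at hfeq
      have hvaa := hva a b c ha0 hc0
      have hvbb := hvb a b c ha0 hc0
      have hsh := abs_sinh_le_cosh (κ*(a - m))
      have hsz := abs_sinh_le_cosh b
      have h1a : 1/a ≤ 1/δ := one_div_le_one_div_of_le hδ0 haδ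
      have h1a0 : 0 < 1/a := by positivity
      have hstep1 : (va a b c + 1/a) * Real.sinh (κ*(a - m)) ≤
          (K + 1/δ) * Real.cosh (κ*(a - m)) := by
        have e1 : (va a b c + 1/a) * Real.sinh (κ*(a-m)) ≤
            |va a b c + 1/a| * |Real.sinh (κ*(a-m))| := by
          calc (va a b c + 1/a) * Real.sinh (κ*(a-m))
              ≤ |(va a b c + 1/a) * Real.sinh (κ*(a-m))| := le_abs_self _
            _ = |va a b c + 1/a| * |Real.sinh (κ*(a-m))| := abs_mul _ _
        have e2 : |va a b c + 1/a| ≤ K + 1/δ := by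
          have h5 := abs_add_le (va a b c) (1/a)
          have h6 : |1/a| = 1/a := abs_of_pos h1a0
          linarith only [h5, h6, hvaa, h1a]
        have e3 : |va a b c + 1/a| * |Real.sinh (κ*(a-m))| ≤
            (K + 1/δ) * Real.cosh (κ*(a-m)) :=
          mul_le_mul e2 hsh (abs_nonneg _) (by linarith only [hK0, hδinv])
        linarith only [e1, e3]
      have hstep2 : -(vb a b c * Real.sinh b) ≤ K * Real.cosh b := by
        have e1 : -(vb a b c * Real.sinh b) ≤ |vb a b c * Real.sinh b| := neg_le_abs _
        rw [abs_mul] at e1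
        have e3 : |vb a b c| * |Real.sinh b| ≤ K * Real.cosh b :=
          mul_le_mul hvbb hsz (abs_nonneg _) hK0
        linarith only [e1, e3]
      have hbr1 : -(Real.cosh (κ*(a-m)) * (κ*1) * (κ*1)) +
          (va a b c + 1/a) * (Real.sinh (κ*(a-m)) * (κ*1))
          + β * (C₁ - Real.cosh (κ*(a-m))) ≤ 0 := by
        have t3 : K + 1/δ = κ - 1 := by rw [hκdef]; ring
        have t5 : (va a b c + 1/a) * (Real.sinh (κ*(a-m)) * (κ*1)) ≤
            (κ - 1) * Real.cosh (κ*(a-m)) * κ := by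
          rw [← t3]
          nlinarith only [hstep1, hκ0.le]
        have t2 : β * (C₁ - Real.cosh (κ*(a-m))) ≤ 1 := by
          nlinarith only [hβ0.le, hch1, hβC₁]
        have t4 : 1 ≤ Real.cosh (κ*(a-m)) * κ := by nlinarith only [hch1, hκ1]
        linarith only [t5, t2, t4]
      have hX0 : 0 < A * Real.exp (β*(T - c)) := mul_pos hA0 hEβ0
      have hY0 : 0 < η * Real.exp (μ*c) := mul_pos hη0 hEμ0
      have t1 : A * Real.exp (β*(T - c)) * (-(Real.cosh (κ*(a-m)) * (κ*1) * (κ*1)) +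
          (va a b c + 1/a) * (Real.sinh (κ*(a-m)) * (κ*1))
          + β * (C₁ - Real.cosh (κ*(a-m)))) ≤ 0 :=
        mul_nonpos_iff.2 (Or.inl ⟨hX0.le, hbr1⟩)
      have t2 : η * Real.exp (μ*c) * (Real.cosh b - μ * Real.cosh b
          - vb a b c * Real.sinh b) ≤ η * Real.exp (μ*c) * (-Real.cosh b) := by
        apply mul_le_mul_of_nonneg_left _ hY0.le
        rw [hμdef]
        linarith only [hstep2]
      have t3 : η * Real.exp (μ*c) * (-Real.cosh b) ≤ -(η * Real.exp (μ*c)) := by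
        nlinarith only [hcz1, hY0]
      linarith only [hf5, hfeq, hf3, hf4, t1, t2, t3, hY0]
    -- conclude from `main`
    have hch₀ : Real.cosh (κ*(r₀ - m)) ≤ C₁ - 1 := by
      have h1 : |r₀ - m| ≤ W := by
        rw [abs_le]
        have hm' : m = (δ + R)/2 := hmdef
        have hW' : W = (R - δ)/2 := hWdef
        constructor <;> linarith
      have h2 : |κ*(r₀ - m)| ≤ |κ*W| := by
        rw [abs_mul, abs_mul, abs_of_pos hκ0, abs_of_pos hW0]
        exact mul_le_mul_of_nonneg_left h1 hκ0.le
      have h3 : Real.cosh (κ*(r₀-m)) ≤ Real.cosh (κ*W) := Real.cosh_le_cosh.2 h2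
      rw [hC₁def]
      linarith
    have hub : u r₀ z₀ t₀ ≤ Ψ r₀ z₀ t₀ := by
      rw [hFval] at main
      linarith only [main]
    have hΨub : Ψ r₀ z₀ t₀ ≤ L + 3 * ε := by
      have hEβ0 : 0 < Real.exp (β*(T - t₀)) := Real.exp_pos _
      have h1 : 1 ≤ Real.cosh (κ*(r₀ - m)) := Real.one_le_cosh _
      have h2 : A * Real.exp (β*(T - t₀)) * (C₁ - Real.cosh (κ*(r₀ - m))) ≤
          A * Real.exp (β*(T - t₀)) * C₁ := by
        apply mul_le_mul_of_nonneg_left _ (mul_pos hA0 (Real.exp_pos _)).le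
        linarith only [Real.one_le_cosh (κ*(r₀ - m))]
      have h3 : A * Real.exp (β*(T - t₀)) * (C₁ - Real.cosh (κ*(r₀ - m))) ≤ ε :=
        le_trans h2 hTbound
      rw [hΨval]
      linarith only [h3, hηval, hε.le]
    linarith only [hub, hΨub]
  exact real_le_of_forall_pos_le_add fun ε hε => by
    have := hsuff (ε/3) (by linarith)
    linarith

end SwirlAux

set_option maxHeartbeats 4000000 in
/-- **The supremum of the swirl is attained at spatial infinity (equation (4.4)).**
For a smooth solution `Γ` of the swirl equation, bounded together with all its partial
derivatives (as are the coefficients `v_r, v_z`), and vanishing at the axis,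
`limsup_{r→∞} sup_{z,t} |Γ| = sup_{r,z,t} |Γ|`. -/
theorem limsup_swirl_eq_sup
    (vr vz Γ : ℝ → ℝ → ℝ → ℝ)
    (hvr_smooth : ContDiffOn ℝ (⊤ : ℕ∞) (uncurry3 vr) dom3)
    (hvz_smooth : ContDiffOn ℝ (⊤ : ℕ∞) (uncurry3 vz) dom3)
    (hΓ_smooth : ContDiffOn ℝ (⊤ : ℕ∞) (uncurry3 Γ) dom3)
    (hvr_bdd : ∀ n : ℕ, ∃ M, ∀ p ∈ dom3,
      ‖iteratedFDerivWithin ℝ n (uncurry3 vr) dom3 p‖ ≤ M)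
    (hvz_bdd : ∀ n : ℕ, ∃ M, ∀ p ∈ dom3,
      ‖iteratedFDerivWithin ℝ n (uncurry3 vz) dom3 p‖ ≤ M)
    (hΓ_bdd : ∀ n : ℕ, ∃ M, ∀ p ∈ dom3,
      ‖iteratedFDerivWithin ℝ n (uncurry3 Γ) dom3 p‖ ≤ M)
    (hswirl : ∀ r z t, 0 < r → t ≤ 0 →
      pdt Γ r z t = pdr (pdr Γ) r z t + pdz (pdz Γ) r z t
        - vr r z t * pdr Γ r z t - vz r z t * pdz Γ r z t - (1 / r) * pdr Γ r z t)
    (haxis : ∀ z t, t ≤ 0 →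
      Tendsto (fun r => Γ r z t) (nhdsWithin 0 (Ioi 0)) (nhds 0)) :
    Filter.limsup (fun r => ⨆ z : ℝ, ⨆ t : Iic (0:ℝ), |Γ r z (t : ℝ)|) atTop =
      ⨆ r : Ioi (0:ℝ), ⨆ z : ℝ, ⨆ t : Iic (0:ℝ), |Γ (r : ℝ) z (t : ℝ)| := by
  classical
  haveI hne1 : Nonempty (Iic (0:ℝ)) := Set.nonempty_Iic.to_subtype
  haveI hne2 : Nonempty (Ioi (0:ℝ)) := Set.nonempty_Ioi.to_subtype
  have hdom : ∀ r z t : ℝ, 0 < r → t ≤ 0 → ((r,z,t) : ℝ×ℝ×ℝ) ∈ dom3 := by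
    intro r z t hr ht
    exact ⟨hr, Set.mem_univ _, ht⟩
  have hUnhds : ∀ r z t : ℝ, 0 < r → t < 0 → dom3 ∈ nhds ((r,z,t) : ℝ×ℝ×ℝ) := by
    intro r z t hr ht
    have hUopen : IsOpen (Ioi (0:ℝ) ×ˢ ((univ : Set ℝ) ×ˢ Iio (0:ℝ))) :=
      isOpen_Ioi.prod (isOpen_univ.prod isOpen_Iio)
    refine Filter.mem_of_superset (hUopen.mem_nhds ⟨hr, Set.mem_univ _, ht⟩) ?_
    intro p hp
    exact ⟨hp.1, Set.mem_univ _, Set.mem_Iic.2 (le_of_lt (Set.mem_Iio.1 hp.2.2))⟩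
  obtain ⟨M₀', hM₀'⟩ := hΓ_bdd 0
  obtain ⟨M₁', hM₁'⟩ := hΓ_bdd 1
  obtain ⟨Kr, hKrb⟩ := hvr_bdd 0
  obtain ⟨Kz, hKzb⟩ := hvz_bdd 0
  set M₀ : ℝ := max M₀' 0 with hM₀def
  have hM₀0 : 0 ≤ M₀ := le_max_right _ _
  set K : ℝ := max Kr Kz with hKdef
  have habs : ∀ r z t : ℝ, 0 < r → t ≤ 0 → |Γ r z t| ≤ M₀ := by
    intro r z t hr ht
    have h1 := hM₀' (r,z,t) (hdom r z t hr ht)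
    rw [norm_iteratedFDerivWithin_zero, Real.norm_eq_abs] at h1
    exact le_trans h1 (le_max_left _ _)
  have hKr' : ∀ r z t : ℝ, 0 < r → t < 0 → |vr r z t| ≤ K := by
    intro r z t hr ht
    have h1 := hKrb (r,z,t) (hdom r z t hr ht.le)
    rw [norm_iteratedFDerivWithin_zero, Real.norm_eq_abs] at h1
    exact le_trans h1 (le_max_left _ _)
  have hKz' : ∀ r z t : ℝ, 0 < r → t < 0 → |vz r z t| ≤ K := by
    intro r z t hr ht
    have h1 := hKzb (r,z,t) (hdom r z t hr ht.le)
    rw [norm_iteratedFDerivWithin_zero, Real.norm_eq_abs] at h1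
    exact le_trans h1 (le_max_right _ _)
  have hsm2 : ∀ r z t : ℝ, 0 < r → t < 0 → ContDiffAt ℝ 2 (uncurry3 Γ) (r,z,t) := by
    intro r z t hr ht
    exact (hΓ_smooth.contDiffAt (hUnhds r z t hr ht)).of_le (WithTop.coe_le_coe.2 (le_top : (2:ℕ∞) ≤ ⊤))
  have hpdr : ∀ r z t : ℝ, 0 < r → t < 0 → |pdr Γ r z t| ≤ M₁' := by
    intro r z t hr ht
    have hn := hUnhds r z t hr ht
    have hdf : DifferentiableAt ℝ (uncurry3 Γ) (r,z,t) :=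
      (hsm2 r z t hr ht).differentiableAt (by norm_num)
    have hcurve : HasDerivAt (fun s : ℝ => ((s, z, t) : ℝ×ℝ×ℝ)) (1, 0, 0) r :=
      (hasDerivAt_id r).prodMk ((hasDerivAt_const r z).prodMk (hasDerivAt_const r t))
    have hcomp := hdf.hasFDerivAt.comp_hasDerivAt r hcurve
    have hval : pdr Γ r z t = fderiv ℝ (uncurry3 Γ) (r,z,t) (1,0,0) := hcomp.deriv
    have e1 : iteratedFDerivWithin ℝ 1 (uncurry3 Γ) dom3 (r,z,t)
        = iteratedFDeriv ℝ 1 (uncurry3 Γ) (r,z,t) := by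
      calc iteratedFDerivWithin ℝ 1 (uncurry3 Γ) dom3 (r,z,t)
          = iteratedFDerivWithin ℝ 1 (uncurry3 Γ) (univ ∩ dom3) (r,z,t) := by
            rw [univ_inter]
        _ = iteratedFDerivWithin ℝ 1 (uncurry3 Γ) univ (r,z,t) :=
            iteratedFDerivWithin_inter hn
        _ = iteratedFDeriv ℝ 1 (uncurry3 Γ) (r,z,t) := by
            rw [iteratedFDerivWithin_univ]
    have e2 : ‖iteratedFDeriv ℝ 1 (uncurry3 Γ) (r,z,t)‖
        = ‖fderiv ℝ (uncurry3 Γ) (r,z,t)‖ := by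
      rw [← norm_iteratedFDeriv_fderiv (n := 0), norm_iteratedFDeriv_zero]
    have h3 : ‖fderiv ℝ (uncurry3 Γ) (r,z,t)‖ ≤ M₁' := by
      have h4 := hM₁' (r,z,t) (hdom r z t hr ht.le)
      rw [e1, e2] at h4
      exact h4
    have h5 : ‖((1:ℝ),(0:ℝ),(0:ℝ))‖ ≤ 1 := by
      rw [Prod.norm_def, Prod.norm_def]
      simp
    rw [hval, ← Real.norm_eq_abs]
    calc ‖fderiv ℝ (uncurry3 Γ) (r,z,t) (1,0,0)‖
        ≤ ‖fderiv ℝ (uncurry3 Γ) (r,z,t)‖ * ‖((1:ℝ),(0:ℝ),(0:ℝ))‖ :=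
          ContinuousLinearMap.le_opNorm _ _
      _ ≤ M₁' * 1 := by
          apply mul_le_mul h3 h5 (norm_nonneg _)
          exact le_trans (norm_nonneg _) h3
      _ = M₁' := mul_one _
  have hbddA : ∀ r z : ℝ, 0 < r → BddAbove (range fun t : Iic (0:ℝ) => |Γ r z (t:ℝ)|) := by
    intro r z hr
    refine ⟨M₀, ?_⟩
    rintro x ⟨t, rfl⟩
    exact habs r z t hr t.2
  have hinner_le : ∀ r z : ℝ, 0 < r → (⨆ t : Iic (0:ℝ), |Γ r z (t:ℝ)|) ≤ M₀ := by
    intro r z hr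
    exact ciSup_le fun t => habs r z t hr t.2
  have hbddB : ∀ r : ℝ, 0 < r →
      BddAbove (range fun z : ℝ => ⨆ t : Iic (0:ℝ), |Γ r z (t:ℝ)|) := by
    intro r hr
    exact ⟨M₀, by rintro x ⟨z, rfl⟩; exact hinner_le r z hr⟩
  set S : ℝ → ℝ := fun r => ⨆ z : ℝ, ⨆ t : Iic (0:ℝ), |Γ r z (t : ℝ)| with hSdef
  have hS_le : ∀ r : ℝ, 0 < r → S r ≤ M₀ := by
    intro r hr
    rw [hSdef]
    exact ciSup_le fun z => hinner_le r z hr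
  have hpoint : ∀ r z t : ℝ, 0 < r → t ≤ 0 → |Γ r z t| ≤ S r := by
    intro r z t hr ht
    rw [hSdef]
    exact le_trans (le_ciSup (hbddA r z hr) ⟨t, ht⟩) (le_ciSup (hbddB r hr) z)
  have hS0 : ∀ r : ℝ, 0 < r → 0 ≤ S r := fun r hr =>
    le_trans (abs_nonneg (Γ r 0 0)) (hpoint r 0 0 hr le_rfl)
  have hbU : IsBoundedUnder (· ≤ ·) atTop S :=
    ⟨M₀, eventually_map.2 ((eventually_ge_atTop 1).mono fun r hr => hS_le r (by linarith))⟩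
  set L : ℝ := limsup S atTop with hLdef
  have hL0 : 0 ≤ L := by
    rw [hLdef]
    apply le_limsup_of_frequently_le _ hbU
    exact ((eventually_ge_atTop 1).mono fun r hr => hS0 r (by linarith)).frequently
  have hRex : ∀ ε : ℝ, 0 < ε → ∃ R, 1 ≤ R ∧
      ∀ r z t : ℝ, R ≤ r → t ≤ 0 → |Γ r z t| ≤ L + ε := by
    intro ε hε
    have h0 : limsup S atTop < L + ε := by rw [← hLdef]; linarith
    have h1 : ∀ᶠ r in atTop, S r < L + ε := eventually_lt_of_limsup_lt h0 hbU
    obtain ⟨R₀, hR₀⟩ := eventually_atTop.1 (h1.and (eventually_ge_atTop 1))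
    refine ⟨max R₀ 1, le_max_right _ _, fun r z t hr ht => ?_⟩
    have h2 := hR₀ r (le_trans (le_max_left _ _) hr)
    exact le_trans (hpoint r z t (by linarith [h2.2]) ht) h2.1.le
  have hcmp1 : ∀ r z t : ℝ, 0 < r → t < 0 → Γ r z t ≤ L :=
    SwirlAux.comparison vr vz Γ K M₀ M₁' L hKr' hKz'
      (fun r z t hr ht => (abs_le.1 (habs r z t hr ht)).2) hM₀0 hpdr hsm2 hswirl
      (fun z t ht => haxis z t ht.le) hL0
      (fun ε hε => by
        obtain ⟨R, h1, h2⟩ := hRex ε hε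
        exact ⟨R, h1, fun r z t hr ht => le_trans (le_abs_self _) (h2 r z t hr ht)⟩)
  have hnegr : ∀ r z t : ℝ, pdr (fun r z t => -Γ r z t) r z t = -pdr Γ r z t :=
    fun r z t => deriv.neg
  have hnegz : ∀ r z t : ℝ, pdz (fun r z t => -Γ r z t) r z t = -pdz Γ r z t :=
    fun r z t => deriv.neg
  have hnegt : ∀ r z t : ℝ, pdt (fun r z t => -Γ r z t) r z t = -pdt Γ r z t :=
    fun r z t => deriv.neg
  have hnegrr : ∀ r z t : ℝ,
      pdr (pdr (fun r z t => -Γ r z t)) r z t = -pdr (pdr Γ) r z t := by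
    intro r z t
    have h1 : (fun s => pdr (fun r z t => -Γ r z t) s z t) = fun s => -pdr Γ s z t :=
      funext fun s => hnegr s z t
    show deriv (fun s => pdr (fun r z t => -Γ r z t) s z t) r = _
    rw [h1]
    exact deriv.neg
  have hnegzz : ∀ r z t : ℝ,
      pdz (pdz (fun r z t => -Γ r z t)) r z t = -pdz (pdz Γ) r z t := by
    intro r z t
    have h1 : (fun s => pdz (fun r z t => -Γ r z t) r s t) = fun s => -pdz Γ r s t :=
      funext fun s => hnegz r s t
    show deriv (fun s => pdz (fun r z t => -Γ r z t) r s t) z = _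
    rw [h1]
    exact deriv.neg
  have hcmp2 : ∀ r z t : ℝ, 0 < r → t < 0 → -Γ r z t ≤ L :=
    SwirlAux.comparison vr vz (fun r z t => -Γ r z t) K M₀ M₁' L hKr' hKz'
      (fun r z t hr ht => le_trans (neg_le_abs _) (habs r z t hr ht))
      hM₀0
      (fun r z t hr ht => by rw [hnegr r z t, abs_neg]; exact hpdr r z t hr ht)
      (fun r z t hr ht => (hsm2 r z t hr ht).neg)
      (fun r z t hr ht => by
        have h := hswirl r z t hr ht
        rw [hnegt r z t, hnegr r z t, hnegz r z t, hnegrr r z t, hnegzz r z t]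
        linarith [h])
      (fun z t ht => by simpa using (haxis z t ht.le).neg)
      hL0
      (fun ε hε => by
        obtain ⟨R, h1, h2⟩ := hRex ε hε
        exact ⟨R, h1, fun r z t hr ht => le_trans (neg_le_abs _) (h2 r z t hr ht)⟩)
  have habsL : ∀ r z t : ℝ, 0 < r → t < 0 → |Γ r z t| ≤ L := by
    intro r z t hr ht
    rw [abs_le]
    refine ⟨by linarith [hcmp2 r z t hr ht], hcmp1 r z t hr ht⟩
  have habsL0 : ∀ r z t : ℝ, 0 < r → t ≤ 0 → |Γ r z t| ≤ L := by
    intro r z t hr ht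
    rcases lt_or_eq_of_le ht with h | h
    · exact habsL r z t hr h
    · subst h
      have hcw : ContinuousWithinAt (uncurry3 Γ) dom3 ((r,z,(0:ℝ)) : ℝ×ℝ×ℝ) :=
        (hΓ_smooth.continuousOn) _ (hdom r z 0 hr le_rfl)
      have hcurve : ContinuousWithinAt (fun τ : ℝ => ((r,z,τ) : ℝ×ℝ×ℝ)) (Iio 0) 0 :=
        Continuous.continuousWithinAt (by fun_prop)
      have hmap : MapsTo (fun τ : ℝ => ((r,z,τ) : ℝ×ℝ×ℝ)) (Iio (0:ℝ)) dom3 :=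
        fun τ hτ => hdom r z τ hr (le_of_lt hτ)
      have hcomp : ContinuousWithinAt (fun τ : ℝ => Γ r z τ) (Iio 0) 0 := by
        have h6 := ContinuousWithinAt.comp (x := (0:ℝ))
          (f := fun τ : ℝ => ((r,z,τ) : ℝ×ℝ×ℝ)) hcw hcurve hmap
        exact h6
      have ht2 : Tendsto (fun τ : ℝ => |Γ r z τ|) (nhdsWithin 0 (Iio 0))
          (nhds (|Γ r z 0|)) := Filter.Tendsto.abs hcomp
      refine le_of_tendsto ht2 ?_
      filter_upwards [self_mem_nhdsWithin] with τ hτ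
      exact habsL r z τ hr hτ
  have hbddR : BddAbove (range fun ρ : Ioi (0:ℝ) =>
      ⨆ z : ℝ, ⨆ t : Iic (0:ℝ), |Γ (ρ:ℝ) z (t:ℝ)|) := by
    refine ⟨M₀, ?_⟩
    rintro x ⟨ρ, rfl⟩
    exact ciSup_le fun z => hinner_le ρ z ρ.2
  apply le_antisymm
  · rw [hLdef]
    apply limsup_le_of_le
    · exact Filter.isCoboundedUnder_le_of_eventually_le atTop
        ((eventually_ge_atTop 1).mono fun r hr => hS0 r (by linarith))
    · filter_upwards [eventually_gt_atTop 0] with r hr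
      exact le_ciSup hbddR ⟨r, hr⟩
  · refine ciSup_le fun ρ => ciSup_le fun z => ciSup_le fun t => ?_
    exact habsL0 ρ z t ρ.2 t.2
end
end

section
/- Propagation of uniform convergence via the maximum principle (from the proof of Lemma 5.2): Let Z₀ > 0 and let v_r, v_z, Γ : (0,∞)×ℝ → ℝ be smooth, bounded and Z₀-periodic in z, with Γ solving the steady swirl equation ∂_r²Γ + ∂_z²Γ − v_r∂_rΓ − v_z∂_zΓ − (1/r)∂_rΓ = 0. Suppose there exist a constant c₀ ∈ ℝ and a sequence r_i → ∞ such that sup_{z∈ℝ} |Γ(r_i, z) − c₀| → 0 as i → ∞. Then sup_{z∈ℝ} |Γ(r, z) − c₀| → 0 as r → ∞. -/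
open MeasureTheory Real Set Filter

noncomputable section

/-- The spatial domain (0,∞) × ℝ. -/
def dom2 : Set (ℝ × ℝ) := Ioi 0 ×ˢ (univ : Set ℝ)

/-- Uncurrying a function of two real variables. -/
def uncurry2 (f : ℝ → ℝ → ℝ) : ℝ × ℝ → ℝ := fun p => f p.1 p.2


/-- Second derivative test at a local max. -/
lemma second_deriv_nonpos_of_isLocalMax {f f' : ℝ → ℝ} {a c : ℝ}
    (hmax : IsLocalMax f a) (hf : ∀ᶠ x in nhds a, HasDerivAt f (f' x) x)
    (hf' : HasDerivAt f' c a) : c ≤ 0 := by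
  by_contra hc
  push_neg at hc
  have hfa : f' a = 0 := hmax.hasDerivAt_eq_zero hf.self_of_nhds
  have hslope : Tendsto (slope f' a) (nhdsWithin a {a}ᶜ) (nhds c) :=
    hasDerivAt_iff_tendsto_slope.1 hf'
  have hpos : ∀ᶠ x in nhdsWithin a (Ioi a), 0 < f' x := by
    have h1 : ∀ᶠ x in nhdsWithin a (Ioi a), 0 < slope f' a x :=
      (hslope.mono_left (nhdsWithin_mono a (fun x hx => ne_of_gt hx : Ioi a ⊆ {a}ᶜ))).eventually
        (eventually_gt_nhds hc)
    filter_upwards [h1, self_mem_nhdsWithin] with x hx hxa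
    rw [slope_def_field, hfa, sub_zero] at hx
    have hxa' : 0 < x - a := sub_pos.2 hxa
    have := mul_pos hx hxa'
    rwa [div_mul_cancel₀ _ (ne_of_gt hxa')] at this
  obtain ⟨ε, hε, hball⟩ := Metric.eventually_nhds_iff_ball.1 (hf.and hmax)
  obtain ⟨u, hu, hu_sub⟩ :=
    (nhdsGT_basis_of_exists_gt (show ∃ b, a < b from ⟨a + 1, by linarith⟩)).eventually_iff.1 hpos
  set b := min u (a + ε / 2) with hb
  have hab : a < b := lt_min hu (by linarith)
  have hsub : Icc a b ⊆ Metric.ball a ε := by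
    intro y hy
    have h1 : y ≤ a + ε / 2 := hy.2.trans (min_le_right _ _)
    simp only [Metric.mem_ball, Real.dist_eq, abs_lt]
    constructor <;> nlinarith [hy.1]
  have hcont : ContinuousOn f (Icc a b) := fun y hy =>
    ((hball y (hsub hy)).1.continuousAt).continuousWithinAt
  have hderiv : ∀ x ∈ interior (Icc a b), 0 < deriv f x := by
    intro x hx
    rw [interior_Icc] at hx
    rw [(hball x (hsub ⟨hx.1.le, hx.2.le⟩)).1.deriv]
    exact hu_sub ⟨hx.1, hx.2.trans_le (min_le_left _ _)⟩
  have := strictMonoOn_of_deriv_pos (convex_Icc a b) hcont hderiv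
    (left_mem_Icc.2 hab.le) (right_mem_Icc.2 hab.le) hab
  exact absurd (hball b (hsub (right_mem_Icc.2 hab.le))).2 (not_le.2 this)

/-- One-sided maximum principle on a strip, with periodicity in `z`. -/
lemma strip_max_principle (Z₀ a b ε B : ℝ) (hZ₀ : 0 < Z₀) (ha : 0 < a) (hab : a ≤ b)
    (u ur urr uz uzz vr vz : ℝ → ℝ → ℝ)
    (hcont : ContinuousOn (fun p : ℝ × ℝ => u p.1 p.2) (Icc a b ×ˢ (univ : Set ℝ)))
    (hper : ∀ r z, u r (z + Z₀) = u r z)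
    (hur : ∀ r z, a < r → r < b → HasDerivAt (fun s => u s z) (ur r z) r)
    (hurr : ∀ r z, a < r → r < b → HasDerivAt (fun s => ur s z) (urr r z) r)
    (huz : ∀ r z, a < r → r < b → HasDerivAt (fun t => u r t) (uz r z) z)
    (huzz : ∀ r z, a < r → r < b → HasDerivAt (fun t => uz r t) (uzz r z) z)
    (heq : ∀ r z, a < r → r < b →
      urr r z + uzz r z = vr r z * ur r z + vz r z * uz r z + (1 / r) * ur r z)
    (hB : ∀ r z, a < r → r < b → vr r z ≤ B)
    (hbdry : ∀ z, u a z ≤ ε ∧ u b z ≤ ε) :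
    ∀ r z, a ≤ r → r ≤ b → u r z ≤ ε := by
  intro r z har hrb
  set lam : ℝ := max B 0 + 1 / a + 1 with hlam
  have hlam_pos : 0 < lam := by
    have : 0 < 1 / a := by positivity
    have := le_max_right B 0
    simp only [hlam]; linarith
  -- reduce to: ∀ δ > 0, u r z ≤ ε + δ
  refine le_of_forall_pos_le_add (fun δ' hδ' => ?_)
  set δ : ℝ := δ' / exp (lam * b) with hδdef
  have hδ : 0 < δ := by positivity
  -- the perturbed function
  set v : ℝ × ℝ → ℝ := fun p => u p.1 p.2 + δ * exp (lam * p.1) with hv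
  have hvcont : ContinuousOn v (Icc a b ×ˢ Icc 0 Z₀) := by
    apply ContinuousOn.add
    · exact hcont.mono (prod_mono_right (subset_univ _))
    · exact (continuous_const.mul ((Real.continuous_exp.comp
        (continuous_const.mul continuous_fst)))).continuousOn
  have hK : IsCompact (Icc a b ×ˢ Icc 0 Z₀) := (isCompact_Icc).prod isCompact_Icc
  have hKne : ((Icc a b ×ˢ Icc 0 Z₀) : Set (ℝ × ℝ)).Nonempty :=
    ⟨(a, 0), ⟨left_mem_Icc.2 hab, left_mem_Icc.2 hZ₀.le⟩⟩
  obtain ⟨p₀, hp₀K, hmax⟩ := hK.exists_isMaxOn hKne hvcont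
  set r₀ := p₀.1 with hr₀
  set z₀ := p₀.2 with hz₀
  -- periodicity of v in z, integer shifts
  have hperv : ∀ s t, t ∈ Icc a b → v (t, s) ≤ v p₀ := by
    intro s t ht
    have hp : Function.Periodic (u t) Z₀ := fun x => hper t x
    set n : ℤ := ⌊s / Z₀⌋ with hn
    have hfr : s - n * Z₀ = Z₀ * Int.fract (s / Z₀) := by
      rw [Int.fract]
      field_simp
      ring
    have h1 : u t s = u t (s - n * Z₀) := (hp.sub_int_mul_eq n).symm
    have h2 : (s - n * Z₀) ∈ Icc (0:ℝ) Z₀ := by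
      rw [hfr]
      constructor
      · exact mul_nonneg hZ₀.le (Int.fract_nonneg _)
      · calc Z₀ * Int.fract (s / Z₀) ≤ Z₀ * 1 :=
            mul_le_mul_of_nonneg_left (Int.fract_lt_one _).le hZ₀.le
          _ = Z₀ := mul_one _
    calc v (t, s) = v (t, s - n * Z₀) := by simp only [hv, h1]
      _ ≤ v p₀ := hmax ⟨ht, h2⟩
  -- Case: interior max is impossible
  by_cases hint : a < r₀ ∧ r₀ < b
  · exfalso
    obtain ⟨har₀, hr₀b⟩ := hint
    have hgmax : IsLocalMax (fun s => u s z₀ + δ * exp (lam * s)) r₀ := by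
      have : Ioo a b ∈ nhds r₀ := (isOpen_Ioo).mem_nhds ⟨har₀, hr₀b⟩
      filter_upwards [this] with s hs
      exact hperv z₀ s ⟨hs.1.le, hs.2.le⟩
    have hhmax : IsLocalMax (fun t => u r₀ t + δ * exp (lam * r₀)) z₀ := by
      apply Filter.Eventually.of_forall
      intro t
      exact hperv t r₀ ⟨har₀.le, hr₀b.le⟩
    -- z-direction derivatives
    have hz1 : HasDerivAt (fun t => u r₀ t + δ * exp (lam * r₀)) (uz r₀ z₀) z₀ := by
      simpa using (huz r₀ z₀ har₀ hr₀b).add_const (δ * exp (lam * r₀))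
    have huz0 : uz r₀ z₀ = 0 := hhmax.hasDerivAt_eq_zero hz1
    have huzz0 : uzz r₀ z₀ ≤ 0 := by
      refine second_deriv_nonpos_of_isLocalMax hhmax ?_ (huzz r₀ z₀ har₀ hr₀b)
      exact Filter.Eventually.of_forall (fun t => by
        simpa using (huz r₀ t har₀ hr₀b).add_const (δ * exp (lam * r₀)))
    -- r-direction derivatives
    have hexp : ∀ s : ℝ, HasDerivAt (fun x => δ * exp (lam * x)) (δ * lam * exp (lam * s)) s := by
      intro s
      have h := (Real.hasDerivAt_exp (lam * s)).comp s ((hasDerivAt_id s).const_mul lam)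
      simpa [mul_comm, mul_assoc, mul_left_comm] using h.const_mul δ
    have hr1 : ∀ s, a < s → s < b →
        HasDerivAt (fun x => u x z₀ + δ * exp (lam * x))
          (ur s z₀ + δ * lam * exp (lam * s)) s :=
      fun s h1 h2 => (hur s z₀ h1 h2).add (hexp s)
    have hur0 : ur r₀ z₀ + δ * lam * exp (lam * r₀) = 0 :=
      hgmax.hasDerivAt_eq_zero (hr1 r₀ har₀ hr₀b)
    have hurr0 : urr r₀ z₀ + δ * lam * lam * exp (lam * r₀) ≤ 0 := by
      refine second_deriv_nonpos_of_isLocalMax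
        (f' := fun s => ur s z₀ + δ * lam * exp (lam * s)) hgmax ?_ ?_
      · filter_upwards [(isOpen_Ioo).mem_nhds (⟨har₀, hr₀b⟩ : r₀ ∈ Ioo a b)] with s hs
        exact hr1 s hs.1 hs.2
      · have h2 : HasDerivAt (fun s => δ * lam * exp (lam * s))
            (δ * lam * lam * exp (lam * r₀)) r₀ := by
          have := (hexp r₀).const_mul lam
          simpa [mul_comm, mul_assoc, mul_left_comm] using this
        exact (hurr r₀ z₀ har₀ hr₀b).add h2
    -- plug into the equation
    have heq0 := heq r₀ z₀ har₀ hr₀b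
    set E := exp (lam * r₀) with hE
    have hEpos : 0 < E := exp_pos _
    have hur_val : ur r₀ z₀ = -(δ * lam * E) := by linarith
    rw [huz0, hur_val, mul_zero, add_zero] at heq0
    have hvrB : vr r₀ z₀ ≤ max B 0 := (hB r₀ z₀ har₀ hr₀b).trans (le_max_left _ _)
    have hinva : 1 / r₀ ≤ 1 / a := by
      apply one_div_le_one_div_of_le ha har₀.le
    have hδlE : 0 < δ * lam * E := by positivity
    -- urr + uzz = -(vr + 1/r₀) * (δ lam E) ≥ -(max B 0 + 1/a) δ lam E
    -- but urr + uzz ≤ -δ lam lam E; so lam ≤ max B 0 + 1/a = lam - 1, contradiction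
    have h1 : urr r₀ z₀ + uzz r₀ z₀ ≤ -(δ * lam * lam * E) := by linarith
    have h2 : -((max B 0 + 1 / a) * (δ * lam * E)) ≤
        vr r₀ z₀ * (-(δ * lam * E)) + (1 / r₀) * (-(δ * lam * E)) := by
      have hmul := mul_le_mul_of_nonneg_right (add_le_add hvrB hinva) hδlE.le
      nlinarith [hmul]
    have h1' : vr r₀ z₀ * (-(δ * lam * E)) + (1 / r₀) * (-(δ * lam * E)) ≤ -(δ * lam * lam * E) := by
      rw [← heq0]; exact h1
    have h3 : (max B 0 + 1 / a) * (δ * lam * E) ≥ lam * (δ * lam * E) := by nlinarith [h1', h2]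
    have h4 : max B 0 + 1 / a ≥ lam := le_of_mul_le_mul_right (by linarith) hδlE
    simp only [hlam] at h4
    linarith
  · -- boundary max
    push_neg at hint
    have hr₀ab : r₀ = a ∨ r₀ = b := by
      have h1 : a ≤ r₀ := (hp₀K.1).1
      have h2 : r₀ ≤ b := (hp₀K.1).2
      rcases eq_or_lt_of_le h1 with h | h
      · exact Or.inl h.symm
      · exact Or.inr (le_antisymm h2 (hint h))
    have hbd : u r₀ z₀ ≤ ε := by
      rcases hr₀ab with h | h
      · rw [h]; exact (hbdry z₀).1
      · rw [h]; exact (hbdry z₀).2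
    have hv0 : v p₀ ≤ ε + δ * exp (lam * b) := by
      have hexp_le : exp (lam * r₀) ≤ exp (lam * b) :=
        exp_le_exp.2 (mul_le_mul_of_nonneg_left (hp₀K.1).2 hlam_pos.le)
      have : v p₀ = u r₀ z₀ + δ * exp (lam * r₀) := rfl
      rw [this]
      have := mul_le_mul_of_nonneg_left hexp_le hδ.le
      linarith
    have hurz : u r z + δ * exp (lam * r) ≤ v p₀ := hperv z r ⟨har, hrb⟩
    have hδb : δ * exp (lam * b) = δ' := by
      rw [hδdef]; field_simp
    have : 0 < δ * exp (lam * r) := by positivity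
    calc u r z ≤ u r z + δ * exp (lam * r) := by linarith
      _ ≤ ε + δ * exp (lam * b) := hurz.trans hv0
      _ = ε + δ' := by rw [hδb]

lemma slice_r_smooth {f : ℝ → ℝ → ℝ} (h : ContDiffOn ℝ (⊤ : ℕ∞) (uncurry2 f) dom2) (z : ℝ) :
    ContDiffOn ℝ (⊤ : ℕ∞) (fun s => f s z) (Ioi 0) := by
  have heq : (fun s => f s z) = (uncurry2 f) ∘ (fun s => (s, z)) := rfl
  rw [heq]
  exact h.comp ((contDiff_id.prodMk contDiff_const).contDiffOn)
    (fun s hs => ⟨hs, mem_univ _⟩)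

lemma slice_z_smooth {f : ℝ → ℝ → ℝ} (h : ContDiffOn ℝ (⊤ : ℕ∞) (uncurry2 f) dom2) {r : ℝ}
    (hr : 0 < r) : ContDiffOn ℝ (⊤ : ℕ∞) (fun t => f r t) (univ : Set ℝ) := by
  have heq : (fun t => f r t) = (uncurry2 f) ∘ (fun t => (r, t)) := rfl
  rw [heq]
  exact h.comp ((contDiff_const.prodMk contDiff_id).contDiffOn)
    (fun t _ => ⟨hr, mem_univ _⟩)

lemma hasDerivAt_of_contDiffOn_Ioi {g : ℝ → ℝ} (h : ContDiffOn ℝ (⊤ : ℕ∞) g (Ioi 0)) {r : ℝ}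
    (hr : 0 < r) : HasDerivAt g (deriv g r) r :=
  ((h.differentiableOn (by simp)).differentiableAt (isOpen_Ioi.mem_nhds hr)).hasDerivAt

lemma deriv_contDiffOn_Ioi {g : ℝ → ℝ} (h : ContDiffOn ℝ (⊤ : ℕ∞) g (Ioi 0)) :
    ContDiffOn ℝ (⊤ : ℕ∞) (deriv g) (Ioi 0) :=
  h.deriv_of_isOpen isOpen_Ioi (by simp)

lemma hasDerivAt_of_contDiffOn_univ {g : ℝ → ℝ} (h : ContDiffOn ℝ (⊤ : ℕ∞) g (univ : Set ℝ))
    (z : ℝ) : HasDerivAt g (deriv g z) z :=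
  ((h.differentiableOn (by simp)).differentiableAt (isOpen_univ.mem_nhds (mem_univ z))).hasDerivAt

lemma deriv_contDiffOn_univ {g : ℝ → ℝ} (h : ContDiffOn ℝ (⊤ : ℕ∞) g (univ : Set ℝ)) :
    ContDiffOn ℝ (⊤ : ℕ∞) (deriv g) (univ : Set ℝ) :=
  h.deriv_of_isOpen isOpen_univ (by simp)

section derivs
variable {Γ : ℝ → ℝ → ℝ}

lemma hDr (hΓ : ContDiffOn ℝ (⊤ : ℕ∞) (uncurry2 Γ) dom2) {r : ℝ} (z : ℝ) (hr : 0 < r) :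
    HasDerivAt (fun s => Γ s z) (pdr2 Γ r z) r :=
  hasDerivAt_of_contDiffOn_Ioi (slice_r_smooth hΓ z) hr

lemma hDrr (hΓ : ContDiffOn ℝ (⊤ : ℕ∞) (uncurry2 Γ) dom2) {r : ℝ} (z : ℝ) (hr : 0 < r) :
    HasDerivAt (fun s => pdr2 Γ s z) (pdr2 (pdr2 Γ) r z) r :=
  hasDerivAt_of_contDiffOn_Ioi (deriv_contDiffOn_Ioi (slice_r_smooth hΓ z)) hr

lemma hDz (hΓ : ContDiffOn ℝ (⊤ : ℕ∞) (uncurry2 Γ) dom2) {r : ℝ} (hr : 0 < r) (z : ℝ) :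
    HasDerivAt (fun t => Γ r t) (pdz2 Γ r z) z :=
  hasDerivAt_of_contDiffOn_univ (slice_z_smooth hΓ hr) z

lemma hDzz (hΓ : ContDiffOn ℝ (⊤ : ℕ∞) (uncurry2 Γ) dom2) {r : ℝ} (hr : 0 < r) (z : ℝ) :
    HasDerivAt (fun t => pdz2 Γ r t) (pdz2 (pdz2 Γ) r z) z :=
  hasDerivAt_of_contDiffOn_univ (deriv_contDiffOn_univ (slice_z_smooth hΓ hr)) z

end derivs

/-- **Propagation of uniform convergence via the maximum principle (from the proof of
Lemma 5.2).** If a bounded smooth `Z₀`-periodic solution `Γ` of the steady swirl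
equation converges uniformly in `z` to `c₀` along some sequence `r_i → ∞`, then it
converges uniformly in `z` to `c₀` as `r → ∞`. -/
theorem uniform_convergence_propagation
    (Z₀ : ℝ) (hZ₀ : 0 < Z₀)
    (vr vz Γ : ℝ → ℝ → ℝ)
    (hvr_smooth : ContDiffOn ℝ (⊤ : ℕ∞) (uncurry2 vr) dom2)
    (hvz_smooth : ContDiffOn ℝ (⊤ : ℕ∞) (uncurry2 vz) dom2)
    (hΓ_smooth : ContDiffOn ℝ (⊤ : ℕ∞) (uncurry2 Γ) dom2)
    (hvr_bdd : ∃ M, ∀ r z, 0 < r → |vr r z| ≤ M)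
    (hvz_bdd : ∃ M, ∀ r z, 0 < r → |vz r z| ≤ M)
    (hΓ_bdd : ∃ M, ∀ r z, 0 < r → |Γ r z| ≤ M)
    (hvr_per : ∀ r z, vr r (z + Z₀) = vr r z)
    (hvz_per : ∀ r z, vz r (z + Z₀) = vz r z)
    (hΓ_per : ∀ r z, Γ r (z + Z₀) = Γ r z)
    (hswirl : ∀ r z, 0 < r →
      pdr2 (pdr2 Γ) r z + pdz2 (pdz2 Γ) r z
        - vr r z * pdr2 Γ r z - vz r z * pdz2 Γ r z - (1 / r) * pdr2 Γ r z = 0)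
    (c₀ : ℝ) (ri : ℕ → ℝ)
    (hri_pos : ∀ i, 0 < ri i)
    (hri_tendsto : Tendsto ri atTop atTop)
    (hconv : ∀ ε > (0:ℝ), ∃ N : ℕ, ∀ i ≥ N, ∀ z : ℝ, |Γ (ri i) z - c₀| ≤ ε) :
    ∀ ε > (0:ℝ), ∃ r₀ : ℝ, ∀ r ≥ r₀, ∀ z : ℝ, |Γ r z - c₀| ≤ ε := by
  intro ε hε
  obtain ⟨Mvr, hMvr⟩ := hvr_bdd
  obtain ⟨N, hN⟩ := hconv ε hε
  refine ⟨ri N, fun r hr z => ?_⟩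
  obtain ⟨j, hjr, hjN⟩ :=
    ((hri_tendsto.eventually_ge_atTop r).and (eventually_ge_atTop N)).exists
  have ha : 0 < ri N := hri_pos N
  have hab : ri N ≤ ri j := hr.trans hjr
  have hpos : ∀ s : ℝ, ri N < s → 0 < s := fun s hs => ha.trans hs
  have hsub : (Icc (ri N) (ri j) ×ˢ (univ : Set ℝ)) ⊆ dom2 :=
    fun p hp => ⟨lt_of_lt_of_le ha hp.1.1, mem_univ _⟩
  rw [abs_le]
  constructor
  · -- lower bound via max principle for c₀ - Γ
    have := strip_max_principle Z₀ (ri N) (ri j) ε Mvr hZ₀ ha hab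
      (fun r z => c₀ - Γ r z) (fun r z => -(pdr2 Γ r z)) (fun r z => -(pdr2 (pdr2 Γ) r z))
      (fun r z => -(pdz2 Γ r z)) (fun r z => -(pdz2 (pdz2 Γ) r z)) vr vz
      (ContinuousOn.sub continuousOn_const (hΓ_smooth.continuousOn.mono hsub))
      (fun r z => by simp [hΓ_per])
      (fun r z h1 h2 => (hDr hΓ_smooth z (hpos r h1)).const_sub c₀)
      (fun r z h1 h2 => (hDrr hΓ_smooth z (hpos r h1)).neg)
      (fun r z h1 h2 => (hDz hΓ_smooth (hpos r h1) z).const_sub c₀)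
      (fun r z h1 h2 => (hDzz hΓ_smooth (hpos r h1) z).neg)
      (fun r z h1 h2 => by have h := hswirl r z (hpos r h1); linarith)
      (fun r z h1 h2 => le_of_abs_le (hMvr r z (hpos r h1)))
      (fun z => ⟨by show c₀ - Γ (ri N) z ≤ ε
                    have := (abs_le.1 (hN N le_rfl z)).1; linarith,
                 by show c₀ - Γ (ri j) z ≤ ε
                    have := (abs_le.1 (hN j hjN z)).1; linarith⟩)
      r z hr hjr
    linarith
  · -- upper bound via max principle for Γ - c₀
    exact strip_max_principle Z₀ (ri N) (ri j) ε Mvr hZ₀ ha hab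
      (fun r z => Γ r z - c₀) (pdr2 Γ) (pdr2 (pdr2 Γ)) (pdz2 Γ) (pdz2 (pdz2 Γ)) vr vz
      (ContinuousOn.sub (hΓ_smooth.continuousOn.mono hsub) continuousOn_const)
      (fun r z => by simp [hΓ_per])
      (fun r z h1 h2 => (hDr hΓ_smooth z (hpos r h1)).sub_const c₀)
      (fun r z h1 h2 => hDrr hΓ_smooth z (hpos r h1))
      (fun r z h1 h2 => (hDz hΓ_smooth (hpos r h1) z).sub_const c₀)
      (fun r z h1 h2 => hDzz hΓ_smooth (hpos r h1) z)
      (fun r z h1 h2 => by have h := hswirl r z (hpos r h1); linarith)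
      (fun r z h1 h2 => le_of_abs_le (hMvr r z (hpos r h1)))
      (fun z => ⟨(abs_le.1 (hN N le_rfl z)).2, (abs_le.1 (hN j hjN z)).2⟩)
      r z hr hjr
end
end
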